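/- arXiv:0911.0517 — 8 statements merged into one kernel-verified Lean document; each statement's English description precedes it below -/
import Mathlib

section
/- If q alternatives with probabilities μ_1 ≥ μ_2 ≥ ... ≥ μ_q ≥ 0 summing to 1 are given, then 1 - μ_1 ≤ (q/2)·Σ_{a=1}^q μ_a(1-μ_a). -/
open Finset
open scoped Classical

/-- `Ranking q` is the set `L_q` of total orderings (permutations) of the `q` alternatives;
`x k` is the alternative ranked in position `k` (position `0` is the top). -/
abbrev Ranking (q : ℕ) := Equiv.Perm (Fin q)

/-- A voting profile: one ranking for each of the `n` voters. -/
abbrev Profile (n q : ℕ) := Fin n → Ranking q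

/-- Uniform probability of an event on a finite type. -/
noncomputable def prob {α : Type*} [Fintype α] (P : α → Prop) : ℝ :=
  ((Finset.univ.filter P).card : ℝ) / (Fintype.card α : ℝ)

/-- `Prefers x a b`: the ranking `x` ranks alternative `a` strictly above `b`. -/
def Prefers {q : ℕ} (x : Ranking q) (a b : Fin q) : Prop :=
  x.symm a < x.symm b

/-- `mu f a = P(f(X) = a)` for `X` uniform. -/
noncomputable def mu {n q : ℕ} (f : Profile n q → Fin q) (a : Fin q) : ℝ :=
  prob (fun x : Profile n q => f x = a)

/-- Statistical distance between two social choice functions. -/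
noncomputable def distF {n q : ℕ} (f g : Profile n q → Fin q) : ℝ :=
  prob (fun x : Profile n q => f x ≠ g x)

/-- `Inf_i^a(f) = P(f(X) = a, f(X^{(i)}) ≠ a)`, where `X^{(i)}` re-randomizes coordinate `i`. -/
noncomputable def infA {n q : ℕ} (f : Profile n q → Fin q) (i : Fin n) (a : Fin q) : ℝ :=
  prob (fun p : Profile n q × Ranking q =>
    f p.1 = a ∧ f (Function.update p.1 i p.2) ≠ a)

/-- `Inf_i^{a,b}(f) = P(f(X) = a, f(X^{(i)}) = b)`. -/
noncomputable def infAB {n q : ℕ} (f : Profile n q → Fin q) (i : Fin n) (a b : Fin q) : ℝ :=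
  prob (fun p : Profile n q × Ranking q =>
    f p.1 = a ∧ f (Function.update p.1 i p.2) = b)

/-- The adjacent transposition `[a:b]` applied to a ranking `x`: exchanges `a` and `b`
if they occupy adjacent positions in `x`, and does nothing otherwise. -/
noncomputable def adjTrans {q : ℕ} (a b : Fin q) (x : Ranking q) : Ranking q :=
  if ((x.symm a : ℕ) + 1 = (x.symm b : ℕ) ∨ (x.symm b : ℕ) + 1 = (x.symm a : ℕ))
  then x * Equiv.swap (x.symm a) (x.symm b) else x

/-- `Inf_i^{a;z}(f)` for `z` the adjacent transposition `[c:d]`: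
`(1/2)·P(f(X) = a, f([c:d]_i X) ≠ a)`. -/
noncomputable def infAz {n q : ℕ} (f : Profile n q → Fin q) (i : Fin n) (a c d : Fin q) : ℝ :=
  (1 / 2) * prob (fun x : Profile n q =>
    f x = a ∧ f (Function.update x i (adjTrans c d (x i))) ≠ a)

/-- `Inf_i^{a,b;[a:b]}(f) = (1/2)·P(f(X) = a, f([a:b]_i X) = b)`. -/
noncomputable def infABadj {n q : ℕ} (f : Profile n q → Fin q) (i : Fin n) (a b : Fin q) : ℝ :=
  (1 / 2) * prob (fun x : Profile n q =>
    f x = a ∧ f (Function.update x i (adjTrans a b (x i))) = b)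

/-- An edge of the refined graph on rankings: `y` is obtained from `x` by swapping the
alternatives in two adjacent positions. -/
def AdjStep {q : ℕ} (x y : Ranking q) : Prop :=
  ∃ (k : ℕ) (h : k + 1 < q),
    y = x * Equiv.swap ⟨k, Nat.lt_of_succ_lt h⟩ ⟨k + 1, h⟩

/-- `f` is manipulable at `x`. -/
def IsManip {n q : ℕ} (f : Profile n q → Fin q) (x : Profile n q) : Prop :=
  ∃ (i : Fin n) (y : Profile n q),
    (∀ j, j ≠ i → y j = x j) ∧ Prefers (x i) (f y) (f x)

/-- `y` is obtained from `x` by permuting (at most) `r` adjacent alternatives, i.e. `y`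
agrees with `x` outside a window of `r` consecutive positions. -/
def AdjBlockPerm {q : ℕ} (r : ℕ) (x y : Ranking q) : Prop :=
  ∃ s : ℕ, ∀ k : Fin q, ¬ (s ≤ (k : ℕ) ∧ (k : ℕ) < s + r) → y k = x k

/-- `x` is an `r`-manipulation point of `f`. -/
def IsRManip {n q : ℕ} (f : Profile n q → Fin q) (r : ℕ) (x : Profile n q) : Prop :=
  ∃ (i : Fin n) (y : Profile n q),
    (∀ j, j ≠ i → y j = x j) ∧ AdjBlockPerm r (x i) (y i) ∧
      Prefers (x i) (f y) (f x)

/-- `g` depends on at most the `i`-th coordinate for some `i` (the class `DICT`). -/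
def IsDictator {n q : ℕ} (g : Profile n q → Fin q) : Prop :=
  ∃ i : Fin n, ∀ x y : Profile n q, x i = y i → g x = g y

/-- `g` takes at most two values. -/
def TakesAtMostTwoValues {n q : ℕ} (g : Profile n q → Fin q) : Prop :=
  ∃ a b : Fin q, ∀ x, g x = a ∨ g x = b

/-- `f` is neutral: it commutes with every renaming `σ` of the alternatives. -/
def Neutral {n q : ℕ} (f : Profile n q → Fin q) : Prop :=
  ∀ (σ : Ranking q) (x : Profile n q), f (fun k => σ * x k) = σ (f x)

/-- `Shifted c u w`: the ranking `w` equals `u` except that the position of the single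
alternative `c` may have been shifted arbitrarily (all other alternatives keep their
relative order). -/
def Shifted {q : ℕ} (c : Fin q) (u w : Ranking q) : Prop :=
  ∀ e e' : Fin q, e ≠ c → e' ≠ c → (Prefers u e e' ↔ Prefers w e e')


/-- for a probability vector `μ_1 ≥ μ_2 ≥ ... ≥ μ_q ≥ 0` summing to `1`,
`1 - μ_1 ≤ (q/2)·Σ_a μ_a(1-μ_a)`. -/
theorem one_sub_max_le_half_q_total_variance (q : ℕ) (hq : 0 < q) (μ : Fin q → ℝ)
    (hsorted : Antitone μ) (hnonneg : ∀ a, 0 ≤ μ a) (hsum : ∑ a : Fin q, μ a = 1) :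
    1 - μ ⟨0, hq⟩ ≤ (q : ℝ) / 2 * ∑ a : Fin q, μ a * (1 - μ a) := by
  have hmax : ∀ a : Fin q, μ a ≤ μ ⟨0, hq⟩ := fun a =>
    hsorted (by simp [Fin.le_def])
  have hsq : ∑ a : Fin q, μ a * μ a ≤ μ ⟨0, hq⟩ := by
    calc ∑ a : Fin q, μ a * μ a ≤ ∑ a : Fin q, μ ⟨0, hq⟩ * μ a := by
          apply Finset.sum_le_sum
          intro a _
          exact mul_le_mul_of_nonneg_right (hmax a) (hnonneg a)
      _ = μ ⟨0, hq⟩ := by rw [← Finset.mul_sum, hsum, mul_one]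
  have hkey : 1 - μ ⟨0, hq⟩ ≤ ∑ a : Fin q, μ a * (1 - μ a) := by
    have : ∑ a : Fin q, μ a * (1 - μ a) = 1 - ∑ a : Fin q, μ a * μ a := by
      simp [mul_sub, Finset.sum_sub_distrib, hsum, mul_one]
    rw [this]; linarith
  rcases eq_or_lt_of_le (show 1 ≤ q from hq) with h1 | h2
  · -- q = 1
    have hq1 : q = 1 := h1.symm
    subst hq1
    have : μ ⟨0, hq⟩ = 1 := by
      rw [← hsum]; simp [Fin.sum_univ_one]
    have h0 : μ 0 = 1 := by simpa using this
    rw [this]; simp [Fin.sum_univ_one, h0]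
  · have hq2 : (2 : ℝ) ≤ q := by exact_mod_cast h2
    have hnn : 0 ≤ ∑ a : Fin q, μ a * (1 - μ a) := by linarith [hmax ⟨0, hq⟩,
      (by rw [← hsum]; exact Finset.single_le_sum (fun a _ => hnonneg a) (Finset.mem_univ (⟨0, hq⟩ : Fin q)) : μ ⟨0, hq⟩ ≤ 1)]
    nlinarith
end

section
/- Let H be a group acting freely (fixed-point-freely) on a set L, let L_1, L_2 ⊆ L with H·L_1 = L_1 and H·L_2 = L_2, and let Γ : L_1 × L_2 → paths in L of length at most ℓ be an H-invariant canonical path map (Γ(hx, hy) = h·Γ(x,y) for all h ∈ H). Then for every z ∈ L and every 0 ≤ i ≤ ℓ, the number of pairs (x,y) ∈ L_1 × L_2 whose canonical path has length ≥ i and whose i-th vertex equals z is at most |L_1|·|L_2|/|H|. -/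
open Finset
open scoped Classical

/-- for a fixed-point-free action of `H` on `L` and an `H`-invariant canonical
path map `Γ : L1 × L2 → P_L(ℓ)` (paths recorded as their lists of vertices, so a path of
length at most `ℓ` has at most `ℓ + 1` vertices), the number of pairs whose path has `i`-th
vertex equal to `z` is at most `|L1|·|L2|/|H|`. -/
theorem canonical_path_group_action_pointwise {L H : Type*} [Fintype L] [DecidableEq L] [Fintype H] [Group H]
    [MulAction H L]
    (hfree : ∀ (h : H) (x : L), h • x = x → h = 1)
    (L1 L2 : Finset L)
    (hL1 : ∀ (h : H), ∀ x ∈ L1, h • x ∈ L1)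
    (hL2 : ∀ (h : H), ∀ x ∈ L2, h • x ∈ L2)
    (ℓ : ℕ) (Γ : L → L → List L)
    (hstart : ∀ x ∈ L1, ∀ y ∈ L2, (Γ x y).head? = some x)
    (hend : ∀ x ∈ L1, ∀ y ∈ L2, (Γ x y).getLast? = some y)
    (hlen : ∀ x ∈ L1, ∀ y ∈ L2, (Γ x y).length ≤ ℓ + 1)
    (hinv : ∀ (h : H), ∀ x ∈ L1, ∀ y ∈ L2,
      Γ (h • x) (h • y) = (Γ x y).map (fun v => h • v))
    (z : L) (i : ℕ) (hi : i ≤ ℓ) :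
    ((((L1 ×ˢ L2).filter (fun p : L × L => (Γ p.1 p.2)[i]? = some z)).card : ℝ))
      ≤ (L1.card : ℝ) * (L2.card : ℝ) / (Fintype.card H : ℝ) := by
    classical
  set S := (L1 ×ˢ L2).filter (fun p : L × L => (Γ p.1 p.2)[i]? = some z) with hSdef
  have key : (Fintype.card H) * S.card ≤ (L1 ×ˢ L2).card := by
    have hinj := Finset.card_le_card_of_injOn
      (f := fun q : H × (L × L) => (q.1 • q.2.1, q.1 • q.2.2))
      (s := (Finset.univ : Finset H) ×ˢ S) (t := L1 ×ˢ L2) ?_ ?_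
    · simpa [Finset.card_product] using hinj
    · rintro ⟨h, x, y⟩ hq
      simp only [Finset.mem_coe, Finset.mem_product, Finset.mem_univ, true_and, hSdef,
        Finset.mem_filter] at hq
      exact Finset.mem_product.mpr ⟨hL1 h x hq.1.1, hL2 h y hq.1.2⟩
    · rintro ⟨h, x, y⟩ hq ⟨h', x', y'⟩ hq' heq
      simp only [Finset.mem_coe, Finset.mem_product, Finset.mem_univ, true_and, hSdef,
        Finset.mem_filter, Finset.mem_product] at hq hq'
      obtain ⟨⟨hx, hy⟩, hz⟩ := hq
      obtain ⟨⟨hx', hy'⟩, hz'⟩ := hq'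
      simp only [Prod.mk.injEq] at heq
      obtain ⟨e1, e2⟩ := heq
      have hv : (Γ (h • x) (h • y))[i]? = some (h • z) := by
        rw [hinv h x hx y hy, List.getElem?_map, hz]; rfl
      have hv' : (Γ (h' • x') (h' • y'))[i]? = some (h' • z) := by
        rw [hinv h' x' hx' y' hy', List.getElem?_map, hz']; rfl
      rw [e1, e2, hv'] at hv
      have hzz : h • z = h' • z := (Option.some_injective _ hv.symm)
      have hh : h = h' := by
        have : (h'⁻¹ * h) • z = z := by
          rw [mul_smul, hzz, inv_smul_smul]
        have := hfree _ _ this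
        rwa [inv_mul_eq_one, eq_comm] at this
      subst hh
      have hxx : x = x' := smul_left_cancel h e1
      have hyy : y = y' := smul_left_cancel h e2
      simp [hxx, hyy]
  have hHpos : (0 : ℝ) < Fintype.card H := by
    exact_mod_cast Fintype.card_pos
  rw [le_div_iff₀ hHpos]
  have : ((S.card : ℝ)) * (Fintype.card H) ≤ ((L1 ×ˢ L2).card : ℝ) := by
    rw [mul_comm]
    exact_mod_cast key
  calc ((S.card : ℝ)) * (Fintype.card H) ≤ ((L1 ×ˢ L2).card : ℝ) := this
    _ = (L1.card : ℝ) * (L2.card : ℝ) := by rw [Finset.card_product]; push_cast; ring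
end

section
/- Under the hypotheses of the previous statement (H fixed-point-free acting on L, Γ an H-invariant canonical path map from L_1 to L_2 of length at most ℓ), for every z ∈ L the total number of pairs (x,y) whose canonical path passes through z (at any position 0 ≤ i ≤ ℓ) is at most (ℓ+1)·|L_1|·|L_2|/|H|. -/
open Finset
open scoped Classical

/-- under the same hypotheses, the total number of pairs whose canonical path
passes through `z` is at most `(ℓ+1)·|L1|·|L2|/|H|`. -/
theorem canonical_path_group_action_total {L H : Type*} [Fintype L] [DecidableEq L] [Fintype H] [Group H]
    [MulAction H L]
    (hfree : ∀ (h : H) (x : L), h • x = x → h = 1)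
    (L1 L2 : Finset L)
    (hL1 : ∀ (h : H), ∀ x ∈ L1, h • x ∈ L1)
    (hL2 : ∀ (h : H), ∀ x ∈ L2, h • x ∈ L2)
    (ℓ : ℕ) (Γ : L → L → List L)
    (hstart : ∀ x ∈ L1, ∀ y ∈ L2, (Γ x y).head? = some x)
    (hend : ∀ x ∈ L1, ∀ y ∈ L2, (Γ x y).getLast? = some y)
    (hlen : ∀ x ∈ L1, ∀ y ∈ L2, (Γ x y).length ≤ ℓ + 1)
    (hinv : ∀ (h : H), ∀ x ∈ L1, ∀ y ∈ L2,
      Γ (h • x) (h • y) = (Γ x y).map (fun v => h • v))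
    (z : L) :
    ((((L1 ×ˢ L2).filter (fun p : L × L => z ∈ Γ p.1 p.2)).card : ℝ))
      ≤ ((ℓ : ℝ) + 1) * (L1.card : ℝ) * (L2.card : ℝ) / (Fintype.card H : ℝ) := by
  classical
  have hH : 0 < (Fintype.card H : ℝ) := by
    exact_mod_cast Fintype.card_pos
  set S := L1 ×ˢ L2 with hS
  set F : ℕ → Finset (L × L) := fun i => S.filter (fun p => (Γ p.1 p.2)[i]? = some z) with hF
  have key : ∀ i : ℕ, (F i).card * Fintype.card H ≤ L1.card * L2.card := by
    intro i
    have hle := Finset.card_le_card_of_injOn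
      (f := fun q : (L × L) × H => (q.2 • q.1.1, q.2 • q.1.2))
      (s := (F i) ×ˢ (Finset.univ : Finset H)) (t := S) ?_ ?_
    · simpa [Finset.card_product, Finset.card_univ, hS] using hle
    · rintro ⟨⟨x, y⟩, h⟩ hq
      simp only [Finset.mem_coe, hF, Finset.mem_product, Finset.mem_univ, and_true, Finset.mem_filter,
        hS] at hq
      obtain ⟨⟨hx, hy⟩, _⟩ := hq
      exact Finset.mem_product.2 ⟨hL1 h x hx, hL2 h y hy⟩
    · rintro ⟨⟨x, y⟩, h⟩ hq ⟨⟨x', y'⟩, h'⟩ hq' heq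
      simp only [Finset.coe_product, Set.mem_prod, Finset.mem_coe, Finset.mem_univ, and_true,
        hF, Finset.mem_filter, hS, Finset.mem_product] at hq hq'
      obtain ⟨⟨hx, hy⟩, hzi⟩ := hq
      obtain ⟨⟨hx', hy'⟩, hzi'⟩ := hq'
      obtain ⟨e1, e2⟩ := Prod.mk.injEq .. ▸ heq
      set g : H := h'⁻¹ * h with hg
      have hgx : g • x = x' := by
        rw [hg, mul_smul, e1, inv_smul_smul]
      have hgy : g • y = y' := by
        rw [hg, mul_smul, e2, inv_smul_smul]
      have hmap : Γ x' y' = (Γ x y).map (fun v => g • v) := by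
        rw [← hgx, ← hgy]; exact hinv g x hx y hy
      have : some (g • z) = some z := by
        have := hzi'
        rw [hmap, List.getElem?_map, hzi] at this
        simpa using this
      have hg1 : g = 1 := hfree g z (Option.some.inj this)
      have hhh : h = h' := by
        have : h'⁻¹ * h = 1 := hg ▸ hg1
        exact (eq_of_inv_mul_eq_one this).symm
      have hxx : x = x' := by
        have : h • x = h • x' := by rw [e1, hhh]
        exact smul_left_cancel h this
      have hyy : y = y' := by
        have : h • y = h • y' := by rw [e2, hhh]
        exact smul_left_cancel h this
      simp [hxx, hyy, hhh]
  have hsub : (S.filter (fun p : L × L => z ∈ Γ p.1 p.2)) ⊆ (Finset.range (ℓ + 1)).biUnion F := by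
    intro p hp
    simp only [Finset.mem_filter] at hp
    obtain ⟨hpS, hz⟩ := hp
    obtain ⟨hx, hy⟩ := Finset.mem_product.1 hpS
    obtain ⟨i, hi, hzi⟩ := List.mem_iff_getElem.1 hz
    refine Finset.mem_biUnion.2 ⟨i, Finset.mem_range.2 (lt_of_lt_of_le hi (hlen _ hx _ hy)), ?_⟩
    exact Finset.mem_filter.2 ⟨hpS, by rw [List.getElem?_eq_getElem hi, hzi]⟩
  have hcard : (S.filter (fun p : L × L => z ∈ Γ p.1 p.2)).card
      ≤ ∑ i ∈ Finset.range (ℓ + 1), (F i).card :=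
    le_trans (Finset.card_le_card hsub) Finset.card_biUnion_le
  have hM : ∀ i, ((F i).card : ℝ) ≤ (L1.card : ℝ) * (L2.card : ℝ) / (Fintype.card H : ℝ) := by
    intro i
    rw [le_div_iff₀ hH]
    exact_mod_cast key i
  calc ((S.filter (fun p : L × L => z ∈ Γ p.1 p.2)).card : ℝ)
      ≤ ∑ i ∈ Finset.range (ℓ + 1), ((F i).card : ℝ) := by exact_mod_cast hcard
    _ ≤ ∑ _i ∈ Finset.range (ℓ + 1),
          (L1.card : ℝ) * (L2.card : ℝ) / (Fintype.card H : ℝ) :=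
        Finset.sum_le_sum fun i _ => hM i
    _ = ((ℓ : ℝ) + 1) * (L1.card : ℝ) * (L2.card : ℝ) / (Fintype.card H : ℝ) := by
        rw [Finset.sum_const, Finset.card_range]
        push_cast
        ring
end

section
/- For any social choice function f : L_q^n → [q], any alternative a ∈ [q] and any voter i ∈ [n], Σ_{z ∈ T} Inf_i^{a;z}(f) ≥ (1/q²)·Inf_i^a(f), where T is the set of all q(q-1)/2 adjacent transpositions. -/
open Finset
open scoped Classical

section Aux

variable {q : ℕ}

/-- The adjacent position transposition `(k, k+1)`. -/
def sA (k : ℕ) (h : k + 1 < q) : Equiv.Perm (Fin q) :=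
  Equiv.swap ⟨k, Nat.lt_of_succ_lt h⟩ ⟨k + 1, h⟩

lemma sA_sA {k : ℕ} (h : k + 1 < q) (x : Fin q) : sA k h (sA k h x) = x :=
  Equiv.swap_apply_self _ _ _

/-- Number of inversions of a permutation. -/
noncomputable def invCount (ρ : Equiv.Perm (Fin q)) : ℕ :=
  (Finset.univ.filter (fun p : Fin q × Fin q => p.1 < p.2 ∧ ρ p.2 < ρ p.1)).card

lemma sA_lt {k : ℕ} (h : k + 1 < q) {x y : Fin q} (hxy : x < y)
    (hne : ¬(x = ⟨k, Nat.lt_of_succ_lt h⟩ ∧ y = ⟨k + 1, h⟩)) :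
    sA k h x < sA k h y := by
  have hxy' : (x : ℕ) < (y : ℕ) := hxy
  have hne' : ¬((x : ℕ) = k ∧ (y : ℕ) = k + 1) := by
    rintro ⟨h1, h2⟩; exact hne ⟨Fin.ext h1, Fin.ext h2⟩
  simp only [sA, Equiv.swap_apply_def, Fin.lt_def]
  split_ifs <;> simp only [Fin.ext_iff, Fin.val_mk, Fin.lt_def] at * <;> omega

lemma invCount_mul_sA_lt {k : ℕ} (h : k + 1 < q) (ρ : Equiv.Perm (Fin q))
    (hd : ρ ⟨k + 1, h⟩ < ρ ⟨k, Nat.lt_of_succ_lt h⟩) :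
    invCount (ρ * sA k h) < invCount ρ := by
  classical
  set a : Fin q := ⟨k, Nat.lt_of_succ_lt h⟩ with ha
  set b : Fin q := ⟨k + 1, h⟩ with hb
  have hab : a < b := by simp [ha, hb, Fin.lt_def]
  have hsa : sA k h a = b := Equiv.swap_apply_left _ _
  have hsb : sA k h b = a := Equiv.swap_apply_right _ _
  have hmem : (a, b) ∈ Finset.univ.filter
      (fun p : Fin q × Fin q => p.1 < p.2 ∧ ρ p.2 < ρ p.1) := by
    simp [hab, hd]
  have hle : invCount (ρ * sA k h) ≤
      ((Finset.univ.filter (fun p : Fin q × Fin q => p.1 < p.2 ∧ ρ p.2 < ρ p.1)).erase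
        (a, b)).card := by
    apply Finset.card_le_card_of_injOn (fun p => (sA k h p.1, sA k h p.2))
    · intro p hp
      simp only [Finset.mem_coe, Finset.mem_filter, Finset.mem_univ, true_and] at hp
      have hpne : ¬(p.1 = a ∧ p.2 = b) := by
        rintro ⟨h1, h2⟩
        rw [h1, h2] at hp
        simp only [Equiv.Perm.mul_apply, hsa, hsb] at hp
        exact absurd (hp.2.trans hd) (lt_irrefl _)
      have hlt : sA k h p.1 < sA k h p.2 := sA_lt h hp.1 hpne
      refine Finset.mem_erase.2 ⟨?_, ?_⟩
      · intro hEq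
        have e1 : sA k h p.1 = a := congrArg Prod.fst hEq
        have e2 : sA k h p.2 = b := congrArg Prod.snd hEq
        have p1 : p.1 = b := by rw [← hsa, ← e1, sA_sA]
        have p2 : p.2 = a := by rw [← hsb, ← e2, sA_sA]
        rw [p1, p2] at hp
        exact absurd (hp.1.trans hab) (lt_irrefl _)
      · simp only [Finset.mem_filter, Finset.mem_univ, true_and]
        refine ⟨hlt, ?_⟩
        simpa [Equiv.Perm.mul_apply] using hp.2
    · intro p hp r hr hEq
      have h1 : sA k h p.1 = sA k h r.1 := congrArg Prod.fst hEq
      have h2 : sA k h p.2 = sA k h r.2 := congrArg Prod.snd hEq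
      exact Prod.ext ((Equiv.injective _) h1) ((Equiv.injective _) h2)
  exact lt_of_le_of_lt hle (Finset.card_erase_lt_of_mem hmem)

lemma exists_descent (ρ : Equiv.Perm (Fin q)) (hρ : ρ ≠ 1) :
    ∃ (k : ℕ) (h : k + 1 < q), ρ ⟨k + 1, h⟩ < ρ ⟨k, Nat.lt_of_succ_lt h⟩ := by
  by_contra hc
  push_neg at hc
  have hadj : ∀ (k : ℕ) (h : k + 1 < q),
      ρ ⟨k, Nat.lt_of_succ_lt h⟩ < ρ ⟨k + 1, h⟩ := by
    intro k h
    refine lt_of_le_of_ne (hc k h) fun hEq => ?_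
    have := ρ.injective hEq
    simp [Fin.ext_iff] at this
  have haux : ∀ (d j : ℕ) (h : j + d + 1 < q),
      ρ ⟨j, by omega⟩ < ρ ⟨j + d + 1, h⟩ := by
    intro d
    induction d with
    | zero => intro j h; exact hadj j h
    | succ d ih =>
      intro j h
      have h1 : j + d + 1 < q := by omega
      refine (ih j h1).trans ?_
      have := hadj (j + d + 1) (by omega : j + d + 1 + 1 < q)
      rw [show (⟨j + (d + 1) + 1, h⟩ : Fin q) = ⟨j + d + 1 + 1, by omega⟩ from
        Fin.ext (by show j + (d + 1) + 1 = j + d + 1 + 1; omega)]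
      exact this
  have hmono : StrictMono ρ := by
    intro x y hxy
    have hxy' : (x : ℕ) < (y : ℕ) := hxy
    have h1 : (x : ℕ) + ((y : ℕ) - (x : ℕ) - 1) + 1 < q := by
      have := y.isLt; omega
    have hy : y = ⟨(x : ℕ) + ((y : ℕ) - (x : ℕ) - 1) + 1, h1⟩ := by
      apply Fin.ext
      simp only [Fin.val_mk]
      omega
    rw [hy]
    exact haux ((y : ℕ) - (x : ℕ) - 1) (x : ℕ) h1
  haveI : WellFoundedLT (Fin q) := Finite.to_wellFoundedLT
  have hid : (ρ : Fin q → Fin q) = id :=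
    (hmono.range_inj strictMono_id).1
      (by rw [Set.range_id]; exact Set.range_eq_univ.2 ρ.surjective)
  exact hρ (Equiv.ext fun x => congrFun hid x)

noncomputable def decomp (ρ : Equiv.Perm (Fin q)) : List {k : ℕ // k + 1 < q} :=
  if hρ : ρ = 1 then []
  else
    have hk := (exists_descent ρ hρ).choose_spec
    decomp (ρ * sA (exists_descent ρ hρ).choose hk.choose) ++
      [⟨(exists_descent ρ hρ).choose, hk.choose⟩]
termination_by invCount ρ
decreasing_by
  exact invCount_mul_sA_lt _ ρ hk.choose_spec

lemma decomp_spec (ρ : Equiv.Perm (Fin q)) :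
    ((decomp ρ).map (fun k => sA k.1 k.2)).prod = ρ ∧
      (decomp ρ).length ≤ invCount ρ := by
  suffices H : ∀ (m : ℕ) (ρ : Equiv.Perm (Fin q)), invCount ρ ≤ m →
      ((decomp ρ).map (fun k => sA k.1 k.2)).prod = ρ ∧
        (decomp ρ).length ≤ invCount ρ from H _ ρ le_rfl
  intro m
  induction m with
  | zero =>
    intro ρ hm
    rw [decomp]
    split_ifs with hρ
    · simp [hρ]
    · exfalso
      have hk := (exists_descent ρ hρ).choose_spec
      have := invCount_mul_sA_lt hk.choose ρ hk.choose_spec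
      omega
  | succ m ih =>
    intro ρ hm
    rw [decomp]
    split_ifs with hρ
    · simp [hρ]
    · have hk := (exists_descent ρ hρ).choose_spec
      have hlt := invCount_mul_sA_lt hk.choose ρ hk.choose_spec
      obtain ⟨hprod, hlen⟩ :=
        ih (ρ * sA (exists_descent ρ hρ).choose hk.choose) (by omega)
      constructor
      · rw [List.map_append, List.prod_append, hprod]
        simp only [List.map_cons, List.map_nil, List.prod_cons, List.prod_nil, mul_one]
        rw [mul_assoc]
        simp [sA, Equiv.swap_mul_self]
      · simp only [List.length_append, List.length_singleton]
        omega

lemma decomp_prod (ρ : Equiv.Perm (Fin q)) :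
    ((decomp ρ).map (fun k => sA k.1 k.2)).prod = ρ := (decomp_spec ρ).1

lemma decomp_length (ρ : Equiv.Perm (Fin q)) :
    (decomp ρ).length ≤ invCount ρ := (decomp_spec ρ).2

end Aux

section Walk

variable {q : ℕ}

noncomputable def walk (u ρ : Ranking q) (t : ℕ) : Ranking q :=
  u * (((decomp ρ).take t).map (fun k => sA k.1 k.2)).prod

lemma walk_zero (u ρ : Ranking q) : walk u ρ 0 = u := by simp [walk]

lemma walk_length (u ρ : Ranking q) : walk u ρ (decomp ρ).length = u * ρ := by
  simp [walk, List.take_length, decomp_prod]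

lemma walk_succ (u ρ : Ranking q) {t : ℕ} (ht : t < (decomp ρ).length) :
    walk u ρ (t + 1) = walk u ρ t *
      sA ((decomp ρ).get ⟨t, ht⟩).1 ((decomp ρ).get ⟨t, ht⟩).2 := by
  unfold walk
  rw [List.take_succ, List.map_append, List.prod_append,
    List.getElem?_eq_getElem ht]
  simp [mul_assoc, List.get_eq_getElem]

lemma exists_flip (g : ℕ → Prop) {m : ℕ} (h0 : g 0) (hm : ¬ g m) :
    ∃ t, t < m ∧ g t ∧ ¬ g (t + 1) := by
  induction m with
  | zero => exact absurd h0 hm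
  | succ m ih =>
    by_cases hgm : g m
    · exact ⟨m, Nat.lt_succ_self m, hgm, hm⟩
    · obtain ⟨t, ht, h⟩ := ih hgm
      exact ⟨t, ht.trans (Nat.lt_succ_self m), h⟩

lemma invCount_le (ρ : Ranking q) :
    invCount ρ ≤ (Finset.univ.filter (fun p : Fin q × Fin q => p.1 < p.2)).card := by
  unfold invCount
  apply Finset.card_le_card
  intro x hx
  simp only [Finset.mem_filter] at hx ⊢
  exact ⟨hx.1, hx.2.1⟩

lemma two_card_lt_le (q : ℕ) :
    2 * (Finset.univ.filter (fun p : Fin q × Fin q => p.1 < p.2)).card ≤ q * q := by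
  have hswap : (Finset.univ.filter (fun p : Fin q × Fin q => p.1 < p.2)).card
      = (Finset.univ.filter (fun p : Fin q × Fin q => p.2 < p.1)).card := by
    apply Finset.card_bij (fun p _ => Prod.swap p)
    · intro p hp
      simp only [Finset.mem_filter, Finset.mem_univ, true_and] at hp ⊢
      exact hp
    · intro p _ r _ h
      exact Prod.swap_injective h
    · intro p hp
      simp only [Finset.mem_filter, Finset.mem_univ, true_and] at hp
      exact ⟨p.swap, by simpa using hp, by simp⟩
  have hdisj : Disjoint (Finset.univ.filter (fun p : Fin q × Fin q => p.1 < p.2))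
      (Finset.univ.filter (fun p : Fin q × Fin q => p.2 < p.1)) := by
    rw [Finset.disjoint_left]
    intro p hp hp'
    simp only [Finset.mem_filter, Finset.mem_univ, true_and] at hp hp'
    exact absurd (hp.trans hp') (lt_irrefl _)
  have hun := Finset.card_union_of_disjoint hdisj
  have hle : (Finset.univ.filter (fun p : Fin q × Fin q => p.1 < p.2) ∪
      Finset.univ.filter (fun p : Fin q × Fin q => p.2 < p.1)).card ≤
      (Finset.univ : Finset (Fin q × Fin q)).card :=
    Finset.card_le_card (Finset.subset_univ _)
  rw [hun] at hle
  rw [Finset.card_univ, Fintype.card_prod, Fintype.card_fin] at hle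
  omega

lemma adjTrans_eq (w : Ranking q) (k : ℕ) (hk : k + 1 < q) :
    adjTrans (w ⟨k, Nat.lt_of_succ_lt hk⟩) (w ⟨k + 1, hk⟩) w = w * sA k hk := by
  unfold adjTrans sA
  rw [Equiv.symm_apply_apply, Equiv.symm_apply_apply]
  rw [if_pos (Or.inl rfl)]

lemma adjTrans_comm (c d : Fin q) (w : Ranking q) :
    adjTrans c d w = adjTrans d c w := by
  unfold adjTrans
  by_cases h : ((w.symm c : ℕ) + 1 = (w.symm d : ℕ) ∨ (w.symm d : ℕ) + 1 = (w.symm c : ℕ))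
  · rw [if_pos h, if_pos (Or.symm h), Equiv.swap_comm]
  · rw [if_neg h, if_neg (fun h' => h (Or.symm h'))]

end Walk

lemma main_count (n q : ℕ) (f : Profile n q → Fin q) (a : Fin q) (i : Fin n) :
    (Finset.univ.filter (fun p : Profile n q × Ranking q =>
        f p.1 = a ∧ f (Function.update p.1 i p.2) ≠ a)).card ≤
    ((Finset.univ.filter (fun p : Fin q × Fin q => p.1 < p.2)).sigma
        (fun p => Finset.univ.filter (fun x : Profile n q =>
          f x = a ∧ f (Function.update x i (adjTrans p.1 p.2 (x i))) ≠ a))).card *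
      (Fintype.card (Ranking q) *
        (Finset.univ.filter (fun p : Fin q × Fin q => p.1 < p.2)).card) := by
  classical
  set Lq := (Finset.univ.filter (fun p : Fin q × Fin q => p.1 < p.2)).card with hLq
  set S := (Finset.univ.filter (fun p : Fin q × Fin q => p.1 < p.2)).sigma
      (fun p => Finset.univ.filter (fun x : Profile n q =>
        f x = a ∧ f (Function.update x i (adjTrans p.1 p.2 (x i))) ≠ a)) with hS
  set T := S ×ˢ ((Finset.univ : Finset (Ranking q)) ×ˢ Finset.range Lq) with hT
  have hTcard : T.card = S.card * (Fintype.card (Ranking q) * Lq) := by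
    rw [hT, Finset.card_product, Finset.card_product, Finset.card_univ,
      Finset.card_range]
  rw [← hTcard]
  apply Finset.card_le_card_of_surjOn
    (fun z : ((_ : Fin q × Fin q) × Profile n q) × Ranking q × ℕ =>
      (Function.update z.1.2 i
          (z.1.2 i * ((((decomp z.2.1).take z.2.2).map (fun k => sA k.1 k.2)).prod)⁻¹),
        z.1.2 i * ((((decomp z.2.1).take z.2.2).map (fun k => sA k.1 k.2)).prod)⁻¹ * z.2.1))
  intro p hp
  rw [Finset.mem_coe, Finset.mem_filter] at hp
  obtain ⟨-, hfa, hfb⟩ := hp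
  set u := p.1 i with hu
  set ρ := u⁻¹ * p.2 with hρ
  have h0 : f (Function.update p.1 i (walk u ρ 0)) = a := by
    rw [walk_zero, hu, Function.update_eq_self]
    exact hfa
  have hm : ¬ f (Function.update p.1 i (walk u ρ (decomp ρ).length)) = a := by
    rw [walk_length, hρ, mul_inv_cancel_left]
    exact hfb
  obtain ⟨t, htm, hgt, hgt1⟩ :=
    exists_flip (fun t => f (Function.update p.1 i (walk u ρ t)) = a) h0 hm
  set k := (decomp ρ).get ⟨t, htm⟩ with hk
  set w := walk u ρ t with hw
  set c := w ⟨k.1, Nat.lt_of_succ_lt k.2⟩ with hc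
  set d := w ⟨k.1 + 1, k.2⟩ with hd
  have hcd : c ≠ d := by
    intro h
    have := w.injective h
    simp [Fin.ext_iff] at this
  have hadj : ∀ c' d' : Fin q, (c' = c ∧ d' = d) ∨ (c' = d ∧ d' = c) →
      f (Function.update (Function.update p.1 i w) i
        (adjTrans c' d' (Function.update p.1 i w i))) ≠ a := by
    rintro c' d' (⟨rfl, rfl⟩ | ⟨rfl, rfl⟩) <;>
    · rw [Function.update_self, Function.update_idem]
      first
      | rw [hc, hd, adjTrans_eq w k.1 k.2]
      | rw [hc, hd, adjTrans_comm, adjTrans_eq w k.1 k.2]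
      rw [← walk_succ u ρ htm]
      exact hgt1
  refine ⟨(⟨if c < d then (c, d) else (d, c), Function.update p.1 i w⟩, (ρ, t)),
    ?_, ?_⟩
  · rw [Finset.mem_coe, hT, Finset.mem_product, Finset.mem_product]
    refine ⟨?_, Finset.mem_univ _, ?_⟩
    · rw [hS, Finset.mem_sigma]
      constructor
      · simp only [Finset.mem_filter, Finset.mem_univ, true_and]
        split_ifs with hlt
        · exact hlt
        · exact lt_of_le_of_ne (le_of_not_gt hlt) (Ne.symm hcd)
      · simp only [Finset.mem_filter, Finset.mem_univ, true_and]
        refine ⟨hgt, ?_⟩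
        split_ifs with hlt
        · exact hadj c d (Or.inl ⟨rfl, rfl⟩)
        · exact hadj d c (Or.inr ⟨rfl, rfl⟩)
    · rw [Finset.mem_range]
      exact lt_of_lt_of_le htm ((decomp_length ρ).trans (invCount_le ρ))
  · have hwi : Function.update p.1 i w i = w := Function.update_self _ _ _
    have huw : Function.update p.1 i w i *
        ((((decomp ρ).take t).map (fun k => sA k.1 k.2)).prod)⁻¹ = u := by
      rw [hwi, hw]
      unfold walk
      rw [mul_inv_cancel_right]
    simp only
    rw [huw]
    refine Prod.ext ?_ ?_
    · show Function.update (Function.update p.1 i w) i u = p.1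
      rw [Function.update_idem, hu, Function.update_eq_self]
    · show u * ρ = p.2
      rw [hρ, mul_inv_cancel_left]

lemma arith_aux (q D S C2 R : ℕ) (L : ℕ) (hq : 0 < q) (hC2 : 0 < C2) (hR : 0 < R)
    (hmc : D ≤ S * (R * L)) (h2L : 2 * L ≤ q * q) :
    (1 / (q : ℝ) ^ 2) * ((D : ℝ) / ((C2 : ℝ) * (R : ℝ))) ≤ (S : ℝ) / (2 * (C2 : ℝ)) := by
  have hqR : (0 : ℝ) < (q : ℝ) := by exact_mod_cast hq
  have hC2R : (0 : ℝ) < (C2 : ℝ) := by exact_mod_cast hC2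
  have hRR : (0 : ℝ) < (R : ℝ) := by exact_mod_cast hR
  have hN : 2 * D ≤ S * R * (q * q) := by
    calc 2 * D ≤ 2 * (S * (R * L)) := Nat.mul_le_mul_left 2 hmc
      _ = S * R * (2 * L) := by ring
      _ ≤ S * R * (q * q) := Nat.mul_le_mul_left _ h2L
  have hNR : (2 : ℝ) * D ≤ (S : ℝ) * R * (q * q) := by exact_mod_cast hN
  rw [show (1 / (q : ℝ) ^ 2) * ((D : ℝ) / ((C2 : ℝ) * (R : ℝ))) =
      (D : ℝ) / ((q : ℝ) ^ 2 * (C2 * R)) by ring]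
  rw [div_le_div_iff₀ (by positivity) (by positivity)]
  nlinarith [mul_le_mul_of_nonneg_left hNR hC2R.le]

/-- `Σ_{z ∈ T} Inf_i^{a;z}(f) ≥ (1/q²)·Inf_i^a(f)`, where `T` is the set of
all `q(q-1)/2` adjacent transpositions `[c:d]`, indexed by pairs `c < d`. -/
theorem sum_infAz_ge_infA (n q : ℕ) (f : Profile n q → Fin q) (a : Fin q) (i : Fin n) :
    ∑ p ∈ Finset.univ.filter (fun p : Fin q × Fin q => p.1 < p.2),
        infAz f i a p.1 p.2
      ≥ (1 / (q : ℝ) ^ 2) * infA f i a := by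
  classical
  have hq0 : 0 < q := Fin.pos a
  have hC2 : 0 < Fintype.card (Profile n q) := Fintype.card_pos
  have hR : 0 < Fintype.card (Ranking q) := Fintype.card_pos
  have hmc := main_count n q f a i
  rw [Finset.card_sigma] at hmc
  have h2L := two_card_lt_le q
  simp only [ge_iff_le, infAz, infA, prob, Fintype.card_prod, Nat.cast_mul]
  have hhalf : ∀ x : ℝ,
      (1 / 2) * (x / ((Fintype.card (Profile n q) : ℕ) : ℝ)) =
        x / (2 * ((Fintype.card (Profile n q) : ℕ) : ℝ)) := fun x => by ring
  simp only [hhalf]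
  rw [← Finset.sum_div, ← Nat.cast_sum]
  exact arith_aux q _ _ _ _ _ hq0 hC2 hR (by convert hmc using 3 <;> congr!) h2L
end

section
/- Fix a,b ∈ [q] and let B ⊆ L_q be the set of permutations ranking a above b. There exists a canonical path map Γ : B × B → paths in B of length at most q², whose edges are adjacent transpositions and whose vertices all rank a above b, such that for every z ∈ B the number of pairs whose canonical path passes through z is at most q⁴·q!. -/
open Finset
open scoped Classical

section CanonicalPathAux

variable {q : ℕ}

private lemma prefers_trichotomy (w : Ranking q) {c d : Fin q} (h : c ≠ d) :
    Prefers w c d ∨ Prefers w d c := by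
  rcases lt_or_gt_of_ne (fun he : w.symm c = w.symm d => h (w.symm.injective he)) with h1 | h1
  · exact Or.inl h1
  · exact Or.inr h1

private lemma prefers_asymm {w : Ranking q} {c d : Fin q} (h : Prefers w c d) :
    ¬ Prefers w d c := lt_asymm h

/-- The set of ordered disagreement pairs between two rankings. -/
private noncomputable def Dis (u v : Ranking q) : Finset (Fin q × Fin q) :=
  Finset.univ.filter fun p => Prefers u p.1 p.2 ∧ Prefers v p.2 p.1

private lemma mem_Dis {u v : Ranking q} {c d : Fin q} :
    (c, d) ∈ Dis u v ↔ Prefers u c d ∧ Prefers v d c := by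
  simp [Dis]

private lemma Dis_self (u : Ranking q) : Dis u u = ∅ := by
  ext ⟨c, d⟩
  simp only [mem_Dis, Finset.notMem_empty, iff_false]
  rintro ⟨h1, h2⟩
  exact prefers_asymm h1 h2

private lemma Dis_card_le (u v : Ranking q) : (Dis u v).card ≤ q ^ 2 := by
  calc (Dis u v).card ≤ Finset.univ.card := Finset.card_filter_le _ _
  _ = q ^ 2 := by simp [sq]

private lemma exists_adj {u v : Ranking q} (h : u ≠ v) :
    ∃ c : Fin q × Fin q, (c.1 : ℕ) + 1 = (c.2 : ℕ) ∧ Prefers v (u c.2) (u c.1) := by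
  by_contra hc
  push_neg at hc
  apply h
  have hmono : StrictMono (fun k : Fin q => v.symm (u k)) := by
    cases q with
    | zero => intro k; exact k.elim0
    | succ n =>
      refine Fin.strictMono_iff_lt_succ.2 fun i => ?_
      have hne : u i.castSucc ≠ u i.succ := by
        intro he
        have := u.injective he
        simp only [Fin.ext_iff, Fin.coe_castSucc, Fin.val_succ] at this
        omega
      rcases prefers_trichotomy v hne with h1 | h1
      · exact h1
      · exact absurd h1 (hc (i.castSucc, i.succ) (by simp))
  have hsurj : Function.Surjective (fun k : Fin q => v.symm (u k)) := by
    intro y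
    exact ⟨u.symm (v y), by simp⟩
  have hid : (fun k : Fin q => v.symm (u k)) = id :=
    (StrictMono.range_inj hmono strictMono_id).1 (by
      rw [Set.range_id]
      exact Set.range_eq_univ.2 hsurj)
  refine Equiv.ext fun k => ?_
  have hk := congrFun hid k
  simp only [id] at hk
  calc u k = v (v.symm (u k)) := (v.apply_symm_apply _).symm
  _ = v k := by rw [hk]

private lemma symm_mul_swap (u : Ranking q) (i j c : Fin q) :
    (u * Equiv.swap i j).symm c = Equiv.swap i j (u.symm c) := by
  rw [Equiv.Perm.mul_def, Equiv.symm_trans_apply, Equiv.symm_swap]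

private lemma prefers_mul_swap {u : Ranking q} {i j : Fin q} (hij : (i : ℕ) + 1 = (j : ℕ))
    {c d : Fin q} (h1 : (c, d) ≠ (u i, u j)) (h2 : (c, d) ≠ (u j, u i)) :
    Prefers (u * Equiv.swap i j) c d ↔ Prefers u c d := by
  have hc : c = u (u.symm c) := (u.apply_symm_apply c).symm
  have hd : d = u (u.symm d) := (u.apply_symm_apply d).symm
  have hne1 : ¬(u.symm c = i ∧ u.symm d = j) := by
    rintro ⟨h3, h4⟩
    exact h1 (by rw [hc, hd, h3, h4])
  have hne2 : ¬(u.symm c = j ∧ u.symm d = i) := by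
    rintro ⟨h3, h4⟩
    exact h2 (by rw [hc, hd, h3, h4])
  simp only [Prefers, symm_mul_swap]
  rw [Equiv.swap_apply_def, Equiv.swap_apply_def]
  split_ifs <;> simp only [Fin.ext_iff, Fin.lt_iff_val_lt_val, not_and] at * <;> omega

private lemma prefers_mul_swap_flip {u : Ranking q} {i j : Fin q}
    (hij : (i : ℕ) + 1 = (j : ℕ)) :
    Prefers (u * Equiv.swap i j) (u j) (u i) := by
  simp only [Prefers, symm_mul_swap, Equiv.symm_apply_apply, Equiv.swap_apply_left,
    Equiv.swap_apply_right]
  rw [Fin.lt_iff_val_lt_val]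
  omega

private lemma pair_mem_Dis {u v : Ranking q} {i j : Fin q} (hij : (i : ℕ) + 1 = (j : ℕ))
    (hdis : Prefers v (u j) (u i)) : (u i, u j) ∈ Dis u v := by
  refine mem_Dis.2 ⟨?_, hdis⟩
  simp only [Prefers, Equiv.symm_apply_apply]
  rw [Fin.lt_iff_val_lt_val]
  omega

private lemma Dis_step {u v : Ranking q} {i j : Fin q} (hij : (i : ℕ) + 1 = (j : ℕ))
    (hdis : Prefers v (u j) (u i)) :
    Dis (u * Equiv.swap i j) v = (Dis u v).erase (u i, u j) := by
  ext ⟨c, d⟩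
  rw [Finset.mem_erase, mem_Dis, mem_Dis]
  by_cases h1 : (c, d) = (u i, u j)
  · rw [Prod.mk.injEq] at h1
    obtain ⟨rfl, rfl⟩ := h1
    constructor
    · rintro ⟨ha, _⟩
      exact absurd (prefers_mul_swap_flip hij) (prefers_asymm ha)
    · rintro ⟨hne, _⟩
      exact absurd rfl hne
  · by_cases h2 : (c, d) = (u j, u i)
    · rw [Prod.mk.injEq] at h2
      obtain ⟨rfl, rfl⟩ := h2
      constructor
      · rintro ⟨_, hb⟩
        exact absurd hdis (prefers_asymm hb)
      · rintro ⟨_, hb, _⟩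
        simp only [Prefers, Equiv.symm_apply_apply, Fin.lt_iff_val_lt_val] at hb
        omega
    · rw [prefers_mul_swap hij h1 h2]
      constructor
      · rintro ⟨ha, hb⟩
        exact ⟨h1, ha, hb⟩
      · rintro ⟨_, ha, hb⟩
        exact ⟨ha, hb⟩

private noncomputable def sortPath (u v : Ranking q) : List (Ranking q) :=
  if h : u = v then [v]
  else
    u :: sortPath (u * Equiv.swap (Classical.choose (exists_adj h)).1
      (Classical.choose (exists_adj h)).2) v
termination_by (Dis u v).card
decreasing_by
  have hc := Classical.choose_spec (exists_adj h)
  rw [Dis_step hc.1 hc.2]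
  exact Finset.card_erase_lt_of_mem (pair_mem_Dis hc.1 hc.2)

private lemma sortPath_spec : ∀ (n : ℕ) (u v : Ranking q), (Dis u v).card = n →
    (sortPath u v).head? = some u ∧ (sortPath u v).getLast? = some v ∧
    (sortPath u v).length = (Dis u v).card + 1 ∧ List.Chain' AdjStep (sortPath u v) ∧
    ∀ z ∈ sortPath u v, Dis u z ⊆ Dis u v := by
  intro n
  induction n using Nat.strong_induction_on with
  | _ n ih =>
    intro u v hn
    rw [sortPath]
    by_cases h : u = v
    · subst h
      rw [dif_pos rfl]
      refine ⟨rfl, rfl, by simp [Dis_self], List.isChain_singleton _, ?_⟩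
      intro z hz
      simp only [List.mem_singleton] at hz
      subst hz
      simp [Dis_self]
    · rw [dif_neg h]
      have hspec := Classical.choose_spec (exists_adj h)
      set c := Classical.choose (exists_adj h) with hcdef
      set u' := u * Equiv.swap c.1 c.2 with hu'
      have hstep : Dis u' v = (Dis u v).erase (u c.1, u c.2) := Dis_step hspec.1 hspec.2
      have hmem : (u c.1, u c.2) ∈ Dis u v := pair_mem_Dis hspec.1 hspec.2
      have hlt : (Dis u' v).card < n := by
        rw [hstep, ← hn]
        exact Finset.card_erase_lt_of_mem hmem
      obtain ⟨ih1, ih2, ih3, ih4, ih5⟩ := ih _ hlt u' v rfl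
      have hne : sortPath u' v ≠ [] := by
        intro he
        rw [he] at ih1
        simp at ih1
      refine ⟨rfl, ?_, ?_, ?_, ?_⟩
      · rw [List.getLast?_cons, ih2]
        · simp
      · simp only [List.length_cons, ih3, hstep, Finset.card_erase_of_mem hmem]
        have h0 : (Dis u v).card ≠ 0 := Finset.card_ne_zero_of_mem hmem
        omega
      · refine List.isChain_cons.2 ⟨?_, ih4⟩
        intro w hw
        rw [ih1, Option.mem_def, Option.some.injEq] at hw
        subst hw
        refine ⟨(c.1 : ℕ), by rw [hspec.1]; exact c.2.isLt, ?_⟩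
        rw [hu']
        exact congrArg (fun s => u * s)
          (congrArg₂ Equiv.swap (Fin.ext rfl) (Fin.ext hspec.1.symm))
      · intro z hz
        rcases List.mem_cons.1 hz with rfl | hz'
        · simp [Dis_self]
        · have h5 := ih5 z hz'
          rintro ⟨cc, dd⟩ hp
          rw [mem_Dis] at hp
          by_cases hp1 : (cc, dd) = (u c.1, u c.2)
          · rw [hp1]; exact hmem
          · by_cases hp2 : (cc, dd) = (u c.2, u c.1)
            · exfalso
              rw [Prod.mk.injEq] at hp2
              obtain ⟨rfl, rfl⟩ := hp2
              have := hp.1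
              simp only [Prefers, Equiv.symm_apply_apply, Fin.lt_iff_val_lt_val] at this
              have := hspec.1
              omega
            · have hcd : (cc, dd) ∈ Dis u' z :=
                mem_Dis.2 ⟨(prefers_mul_swap hspec.1 hp1 hp2).2 hp.1, hp.2⟩
              have := h5 hcd
              rw [hstep] at this
              exact Finset.mem_of_mem_erase this

end CanonicalPathAux

section CanonicalPathMain

private lemma getLast?_map' {α β : Type*} (f : α → β) (l : List α) :
    (l.map f).getLast? = l.getLast?.map f := by
  induction l with
  | nil => simp
  | cons a l ih =>
    cases l with
    | nil => simp
    | cons b t =>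
      rw [List.map_cons, List.map_cons, List.getLast?_cons_cons, ← List.map_cons,
        List.getLast?_cons_cons]
      exact ih

/-- fixing `a, b`, on the set `B` of rankings placing `a` above `b` there is a
canonical path map of length at most `q²` whose edges are adjacent transpositions, staying
inside `B`, such that each `z ∈ B` lies on at most `q⁴·q!` canonical paths. -/
theorem exists_canonical_path_map_above (q : ℕ) (a b : Fin q) (hab : a ≠ b) :
    ∃ Γ : Ranking q → Ranking q → List (Ranking q),
      (∀ x y : Ranking q, Prefers x a b → Prefers y a b →
        (Γ x y).head? = some x ∧
        (Γ x y).getLast? = some y ∧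
        (Γ x y).length ≤ q ^ 2 + 1 ∧
        List.Chain' AdjStep (Γ x y) ∧
        (∀ v ∈ Γ x y, Prefers v a b)) ∧
      (∀ z : Ranking q, Prefers z a b →
        (((Finset.univ.filter (fun p : Ranking q × Ranking q =>
            Prefers p.1 a b ∧ Prefers p.2 a b ∧ z ∈ Γ p.1 p.2)).card : ℝ))
          ≤ (q : ℝ) ^ 4 * (Nat.factorial q : ℝ)) := by
  have hq2 : 2 ≤ q := by
    have hnt : Nontrivial (Fin q) := ⟨⟨a, b, hab⟩⟩
    have := Fintype.one_lt_card_iff_nontrivial.2 hnt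
    simp at this; omega
  have key2 : ∀ (x w : Ranking q) (c : Fin q), (x * w).symm c = w.symm (x.symm c) := by
    intro x w c
    simp [← Equiv.Perm.inv_def, mul_inv_rev, Equiv.Perm.mul_apply]
  refine ⟨fun x y => (sortPath 1 (x⁻¹ * y)).map (fun u => x * u), ?_, ?_⟩
  · intro x y hx hy
    obtain ⟨h1, h2, h3, h4, h5⟩ := sortPath_spec (Dis 1 (x⁻¹ * y)).card 1 (x⁻¹ * y) rfl
    refine ⟨?_, ?_, ?_, ?_, ?_⟩
    · rw [List.head?_map, h1]
      simp
    · rw [getLast?_map', h2]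
      simp [mul_inv_cancel_left]
    · rw [List.length_map, h3]
      have := Dis_card_le (1 : Ranking q) (x⁻¹ * y)
      omega
    · unfold List.Chain' at h4 ⊢
      rw [List.isChain_map]
      refine h4.imp ?_
      rintro u v ⟨k, hk, rfl⟩
      exact ⟨k, hk, by rw [mul_assoc]⟩
    · intro w hw
      rw [List.mem_map] at hw
      obtain ⟨u, hu, rfl⟩ := hw
      have hsub := h5 u hu
      have hab' : x.symm a ≠ x.symm b := fun he => hab (x.symm.injective he)
      have h1a : Prefers (1 : Ranking q) (x.symm a) (x.symm b) := by
        exact hx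
      have hσ : Prefers (x⁻¹ * y) (x.symm a) (x.symm b) := by
        have ha' : (x⁻¹ * y).symm (x.symm a) = y.symm a := by
          rw [← key2]
          simp [mul_inv_cancel_left]
        have hb' : (x⁻¹ * y).symm (x.symm b) = y.symm b := by
          rw [← key2]
          simp [mul_inv_cancel_left]
        rw [Prefers, ha', hb']
        exact hy
      show Prefers (x * u) a b
      rw [Prefers, key2, key2]
      rcases prefers_trichotomy u hab' with hgood | hbad
      · exact hgood
      · exfalso
        have hmem : (x.symm a, x.symm b) ∈ Dis 1 u := mem_Dis.2 ⟨h1a, hbad⟩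
        have := (mem_Dis.1 (hsub hmem)).2
        exact prefers_asymm hσ this
  · intro z hz
    have hmemz : ∀ p : Ranking q × Ranking q,
        z ∈ (sortPath 1 (p.1⁻¹ * p.2)).map (fun u => p.1 * u) →
        p.1⁻¹ * z ∈ sortPath 1 (p.1⁻¹ * p.2) := by
      intro p hp
      rw [List.mem_map] at hp
      obtain ⟨u, hu, huz⟩ := hp
      have : p.1⁻¹ * z = u := by rw [← huz, inv_mul_cancel_left]
      rw [this]
      exact hu
    have hlen : ∀ s : Ranking q, (sortPath 1 s).length ≤ q ^ 2 + 1 := by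
      intro s
      obtain ⟨-, -, h3, -, -⟩ := sortPath_spec (Dis 1 s).card 1 s rfl
      rw [h3]
      have := Dis_card_le (1 : Ranking q) s
      omega
    have hcard : (Finset.univ.filter (fun p : Ranking q × Ranking q =>
        Prefers p.1 a b ∧ Prefers p.2 a b ∧
          z ∈ (sortPath 1 (p.1⁻¹ * p.2)).map (fun u => p.1 * u))).card
        ≤ Nat.factorial q * (q ^ 2 + 1) := by
      have := Finset.card_le_card_of_injOn
        (s := Finset.univ.filter (fun p : Ranking q × Ranking q =>
          Prefers p.1 a b ∧ Prefers p.2 a b ∧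
            z ∈ (sortPath 1 (p.1⁻¹ * p.2)).map (fun u => p.1 * u)))
        (t := (Finset.univ ×ˢ Finset.range (q ^ 2 + 1) : Finset (Ranking q × ℕ)))
        (fun p : Ranking q × Ranking q =>
          (p.1⁻¹ * p.2, (sortPath 1 (p.1⁻¹ * p.2)).idxOf (p.1⁻¹ * z)))
        (fun p hp => by
          simp only [Finset.coe_filter, Set.mem_setOf_eq] at hp
          have hmem := hmemz p hp.2.2.2
          rw [Finset.mem_coe, Finset.mem_product]
          exact ⟨Finset.mem_univ _, Finset.mem_range.2
            (lt_of_lt_of_le (List.idxOf_lt_length_iff.2 hmem) (hlen _))⟩)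
        (by
          intro p hp p' hp' heq
          simp only [Finset.coe_filter, Set.mem_setOf_eq] at hp hp'
          have hmem1 := hmemz p hp.2.2.2
          have hmem2 := hmemz p' hp'.2.2.2
          have hσ : p.1⁻¹ * p.2 = p'.1⁻¹ * p'.2 := congrArg Prod.fst heq
          have hidx : (sortPath 1 (p.1⁻¹ * p.2)).idxOf (p.1⁻¹ * z)
              = (sortPath 1 (p.1⁻¹ * p.2)).idxOf (p'.1⁻¹ * z) := by
            have := congrArg Prod.snd heq
            simpa [← hσ] using this
          rw [← hσ] at hmem2
          have hzz : p.1⁻¹ * z = p'.1⁻¹ * z := (List.idxOf_inj hmem1).1 hidx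
          have h11 : p.1 = p'.1 := inv_injective (mul_right_cancel hzz)
          have h22 : p.2 = p'.2 := by
            rw [h11] at hσ
            exact mul_left_cancel hσ
          exact Prod.ext h11 h22)
      calc (Finset.univ.filter _).card
          ≤ (Finset.univ ×ˢ Finset.range (q ^ 2 + 1) : Finset (Ranking q × ℕ)).card := this
        _ = Nat.factorial q * (q ^ 2 + 1) := by
            rw [Finset.card_product, Finset.card_range, Finset.card_univ, Fintype.card_perm,
              Fintype.card_fin]
    have hnat : Nat.factorial q * (q ^ 2 + 1) ≤ q ^ 4 * Nat.factorial q := by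
      rw [mul_comm]
      refine Nat.mul_le_mul_right _ ?_
      have h4 : 4 ≤ q ^ 2 := by nlinarith
      have h44 : q ^ 2 * q ^ 2 = q ^ 4 := by ring
      nlinarith
    calc ((Finset.univ.filter (fun p : Ranking q × Ranking q =>
            Prefers p.1 a b ∧ Prefers p.2 a b ∧
              z ∈ (sortPath 1 (p.1⁻¹ * p.2)).map (fun u => p.1 * u))).card : ℝ)
        ≤ ((Nat.factorial q * (q ^ 2 + 1) : ℕ) : ℝ) := by exact_mod_cast hcard
      _ ≤ ((q ^ 4 * Nat.factorial q : ℕ) : ℝ) := by exact_mod_cast hnat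
      _ = (q : ℝ) ^ 4 * (Nat.factorial q : ℝ) := by push_cast; ring

end CanonicalPathMain
end

section
/- Let f : L_q^n → [q] be a social choice function, a ≠ b ∈ [q], and suppose (x,y) ∈ B_i^{a,b;T}(f), i.e. f(x) = a, f(y) = b, x agrees with y off coordinate i, and x_i = z·y_i for some adjacent transposition z with x_i ≠ y_i. Then either x_i and y_i differ by the adjacent transposition of a and b, or one of x, y is a 2-manipulation point of f. -/
open Finset
open scoped Classical

lemma swap_flip {m : ℕ} (p q s t : Fin m)
    (hpq : (p : ℕ) + 1 = q ∨ (q : ℕ) + 1 = p) (hst : s < t)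
    (hw : Equiv.swap p q t < Equiv.swap p q s) :
    (s = p ∧ t = q) ∨ (s = q ∧ t = p) := by
  by_cases hsp : s = p
  · by_cases htq : t = q
    · exact Or.inl ⟨hsp, htq⟩
    · exfalso
      have htp : t ≠ p := by rintro rfl; exact absurd hsp hst.ne
      rw [hsp, Equiv.swap_apply_left, Equiv.swap_apply_of_ne_of_ne htp htq] at hw
      have h2 := hst; rw [hsp] at h2
      rw [Fin.lt_def] at hw h2
      have hne1 : (t : ℕ) ≠ (q : ℕ) := fun h => htq (Fin.val_injective h)
      omega
  · by_cases hsq : s = q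
    · by_cases htp : t = p
      · exact Or.inr ⟨hsq, htp⟩
      · exfalso
        have htq : t ≠ q := by rintro rfl; exact absurd hsq hst.ne
        rw [hsq, Equiv.swap_apply_right, Equiv.swap_apply_of_ne_of_ne htp htq] at hw
        have h2 := hst; rw [hsq] at h2
        rw [Fin.lt_def] at hw h2
        have hne1 : (t : ℕ) ≠ (p : ℕ) := fun h => htp (Fin.val_injective h)
        omega
    · exfalso
      rw [Equiv.swap_apply_of_ne_of_ne hsp hsq] at hw
      by_cases htp : t = p
      · rw [htp, Equiv.swap_apply_left] at hw
        have h2 := hst; rw [htp] at h2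
        rw [Fin.lt_def] at hw h2
        omega
      · by_cases htq : t = q
        · rw [htq, Equiv.swap_apply_right] at hw
          have h2 := hst; rw [htq] at h2
          rw [Fin.lt_def] at hw h2
          omega
        · rw [Equiv.swap_apply_of_ne_of_ne htp htq] at hw
          exact absurd hst (not_lt.mpr (le_of_lt hw))

/-- if `(x,y) ∈ B_i^{a,b;T}(f)` then either `x_i = [a:b]·y_i`, or one of
`x, y` is a `2`-manipulation point of `f`. -/
theorem boundary_adjTrans_or_two_manip (n q : ℕ) (f : Profile n q → Fin q)
    (a b : Fin q) (hab : a ≠ b) (i : Fin n) (x y : Profile n q)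
    (hfx : f x = a) (hfy : f y = b)
    (hoff : ∀ j, j ≠ i → x j = y j)
    (hadj : ∃ c d : Fin q, c ≠ d ∧ x i = adjTrans c d (y i))
    (hne : x i ≠ y i) :
    x i = adjTrans a b (y i) ∨ IsRManip f 2 x ∨ IsRManip f 2 y := by
  classical
  obtain ⟨c, d, hcd, hx⟩ := hadj
  by_cases hcond : (((y i).symm c : ℕ) + 1 = ((y i).symm d : ℕ) ∨
      ((y i).symm d : ℕ) + 1 = ((y i).symm c : ℕ))
  swap
  · rw [adjTrans, if_neg hcond] at hx; exact absurd hx hne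
  rw [adjTrans, if_pos hcond] at hx
  set u := y i with hu
  set p := u.symm c with hp
  set p' := u.symm d with hp'
  -- hx : x i = u * Equiv.swap p p'
  have hswapk : ∀ k : Fin q, k ≠ p → k ≠ p' → x i k = y i k := by
    intro k h1 h2
    rw [hx, Equiv.Perm.mul_apply, Equiv.swap_apply_of_ne_of_ne h1 h2]
  have habp_xy : AdjBlockPerm 2 (x i) (y i) := by
    refine ⟨min (p : ℕ) (p' : ℕ), fun k hk => (hswapk k ?_ ?_).symm⟩
    · rintro rfl; exact hk ⟨by omega, by omega⟩
    · rintro rfl; exact hk ⟨by omega, by omega⟩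
  have habp_yx : AdjBlockPerm 2 (y i) (x i) := by
    refine ⟨min (p : ℕ) (p' : ℕ), fun k hk => hswapk k ?_ ?_⟩
    · rintro rfl; exact hk ⟨by omega, by omega⟩
    · rintro rfl; exact hk ⟨by omega, by omega⟩
  by_cases hxba : Prefers (x i) b a
  · exact Or.inr (Or.inl ⟨i, y, fun j hj => (hoff j hj).symm, habp_xy, by
      rw [hfx, hfy]; exact hxba⟩)
  by_cases hyab : Prefers (y i) a b
  · exact Or.inr (Or.inr ⟨i, x, hoff, habp_yx, by rw [hfx, hfy]; exact hyab⟩)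
  left
  have hxab : Prefers (x i) a b := by
    rcases lt_trichotomy ((x i).symm a) ((x i).symm b) with h | h | h
    · exact h
    · exact absurd ((x i).symm.injective h) hab
    · exact absurd h hxba
  have hyba : Prefers (y i) b a := by
    rcases lt_trichotomy ((y i).symm b) ((y i).symm a) with h | h | h
    · exact h
    · exact absurd ((y i).symm.injective h) hab.symm
    · exact absurd h hyab
  have hsymm : ∀ e, (x i).symm e = Equiv.swap p p' (u.symm e) := by
    intro e
    have h1 : (x i)⁻¹ = (Equiv.swap p p')⁻¹ * u⁻¹ := by rw [hx, mul_inv_rev]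
    calc (x i).symm e = (x i)⁻¹ e := rfl
      _ = (Equiv.swap p p')⁻¹ (u⁻¹ e) := by rw [h1]; rfl
      _ = Equiv.swap p p' (u.symm e) := by rw [Equiv.swap_inv]; rfl
  have hst : u.symm b < u.symm a := hyba
  have hw : Equiv.swap p p' (u.symm a) < Equiv.swap p p' (u.symm b) := by
    have := hxab
    rwa [Prefers, hsymm a, hsymm b] at this
  obtain ⟨h1, h2⟩ | ⟨h1, h2⟩ := swap_flip p p' (u.symm b) (u.symm a) hcond hst hw
  · rw [adjTrans, if_pos (by rw [h1, h2]; exact hcond.symm), hx, h2, h1,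
      Equiv.swap_comm]
  · rw [adjTrans, if_pos (by rw [h1, h2]; exact hcond), hx, h2, h1]
end

section
/- Let f : L_q^n → [q], and let x,y,z ∈ L_q^n with (x,y) ∈ B_i^{a,b;T}(f) and (z,y) ∈ B_j^{c,b;T}(f), where a,b,c are distinct alternatives and i ≠ j. Then there exists a 3-manipulation point w of f such that w agrees with y on all coordinates outside {i,j}, w_i equals x_i or y_i except possibly with the position of c shifted arbitrarily, and w_j equals z_j or y_j except possibly with the position of a shifted arbitrarily. -/
open Finset
open scoped Classical

lemma symm_mul_swap' {q : ℕ} (Y : Ranking q) (s t e : Fin q) :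
    (Y * Equiv.swap s t).symm e = Equiv.swap s t (Y.symm e) := by
  simp [← Equiv.Perm.inv_def, mul_inv_rev, Equiv.Perm.mul_apply]

lemma adjblock3 {q : ℕ} (Y : Ranking q) (s t : Fin q)
    (hadj : (s:ℕ)+1 = (t:ℕ) ∨ (t:ℕ)+1 = (s:ℕ)) :
    AdjBlockPerm 3 Y (Y * Equiv.swap s t) := by
  refine ⟨min (s:ℕ) (t:ℕ), fun k hk => ?_⟩
  have hks : k ≠ s := by intro h; apply hk; subst h; constructor <;> omega
  have hkt : k ≠ t := by intro h; apply hk; subst h; constructor <;> omega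
  show (Y * Equiv.swap s t) k = Y k
  rw [Equiv.Perm.mul_apply, Equiv.swap_apply_of_ne_of_ne hks hkt]

lemma adjblock3' {q : ℕ} (Y : Ranking q) (s t : Fin q)
    (hadj : (s:ℕ)+1 = (t:ℕ) ∨ (t:ℕ)+1 = (s:ℕ)) :
    AdjBlockPerm 3 (Y * Equiv.swap s t) Y := by
  have h : (Y * Equiv.swap s t) * Equiv.swap s t = Y := by
    rw [mul_assoc, Equiv.swap_mul_self, mul_one]
  have := adjblock3 (Y * Equiv.swap s t) s t hadj
  rwa [h] at this

lemma swap_val' {q : ℕ} (s t p : Fin q) :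
    ((Equiv.swap s t p : Fin q) : ℕ) =
      if (p:ℕ) = (s:ℕ) then (t:ℕ) else if (p:ℕ) = (t:ℕ) then (s:ℕ) else (p:ℕ) := by
  rcases eq_or_ne p s with rfl | h1
  · simp
  · rcases eq_or_ne p t with rfl | h2
    · simp [Equiv.swap_apply_right, Fin.val_eq_val, h1]
    · rw [Equiv.swap_apply_of_ne_of_ne h1 h2]
      simp [Fin.val_eq_val, h1, h2]

lemma shifted_refl' {q : ℕ} (c : Fin q) (u : Ranking q) : Shifted c u u :=
  fun _ _ _ _ => Iff.rfl

lemma side_lemma {n q : ℕ} (f : Profile n q → Fin q) (i : Fin n) (x y : Profile n q)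
    (a b : Fin q) (hab : a ≠ b) (hfx : f x = a) (hfy : f y = b)
    (hoff : ∀ k, k ≠ i → x k = y k)
    (s t : Fin q) (hadj : (s:ℕ)+1 = (t:ℕ) ∨ (t:ℕ)+1 = (s:ℕ))
    (hX : x i = y i * Equiv.swap s t) :
    IsRManip f 3 x ∨ IsRManip f 3 y ∨
      ((((y i).symm b : ℕ) + 1 = (((y i).symm a : ℕ))) ∧
        ((x i).symm a : ℕ) = ((y i).symm b : ℕ) ∧
        ((x i).symm b : ℕ) = ((y i).symm a : ℕ) ∧
        ∀ e : Fin q, e ≠ a → e ≠ b → ((x i).symm e : ℕ) = ((y i).symm e : ℕ)) := by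
  have hsw : ∀ e : Fin q, ((x i).symm e : ℕ) =
      if ((y i).symm e : ℕ) = (s:ℕ) then (t:ℕ)
      else if ((y i).symm e : ℕ) = (t:ℕ) then (s:ℕ) else ((y i).symm e : ℕ) := by
    intro e; rw [hX, symm_mul_swap']; exact swap_val' s t ((y i).symm e)
  have hXa := hsw a
  have hXb := hsw b
  have hxab : ((x i).symm a : ℕ) ≠ ((x i).symm b : ℕ) := by
    simp [Fin.val_eq_val]; exact hab
  have hyab : ((y i).symm a : ℕ) ≠ ((y i).symm b : ℕ) := by
    simp [Fin.val_eq_val]; exact hab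
  rcases lt_or_gt_of_ne hxab with hlt | hgt
  · rcases lt_or_gt_of_ne hyab with hylt | hygt
    · right; left
      refine ⟨i, x, hoff, ?_, ?_⟩
      · rw [hX]; exact adjblock3 (y i) s t hadj
      · rw [hfx, hfy]; exact hylt
    · right; right
      refine ⟨?_, ?_, ?_, ?_⟩
      · split_ifs at hXa hXb <;> omega
      · split_ifs at hXa hXb <;> omega
      · split_ifs at hXa hXb <;> omega
      · intro e hea heb
        have hXe := hsw e
        have h1 : ((y i).symm e : ℕ) ≠ ((y i).symm a : ℕ) := by
          simp [Fin.val_eq_val]; exact hea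
        have h2 : ((y i).symm e : ℕ) ≠ ((y i).symm b : ℕ) := by
          simp [Fin.val_eq_val]; exact heb
        split_ifs at hXa hXb hXe <;> omega
  · left
    refine ⟨i, y, fun k hk => (hoff k hk).symm, ?_, ?_⟩
    · have hY : y i = x i * Equiv.swap s t := by
        rw [hX, mul_assoc, Equiv.swap_mul_self, mul_one]
      rw [hY]; exact adjblock3 (x i) s t hadj
    · rw [hfx, hfy]; exact hgt

/-- if `(x,y) ∈ B_i^{a,b;T}(f)` and `(z,y) ∈ B_j^{c,b;T}(f)` with `a,b,c`
distinct and `i ≠ j`, there is a `3`-manipulation point `w` agreeing with `y` outside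
`{i,j}`, with `w_i` equal to `x_i` or `y_i` up to an arbitrary shift of the position of
`c`, and `w_j` equal to `z_j` or `y_j` up to an arbitrary shift of the position of `a`. -/
theorem boundary_pair_three_manip (n q : ℕ) (f : Profile n q → Fin q)
    (a b c : Fin q) (hab : a ≠ b) (hbc : b ≠ c) (hac : a ≠ c)
    (i j : Fin n) (hij : i ≠ j) (x y z : Profile n q)
    (hfx : f x = a) (hfy : f y = b) (hfz : f z = c)
    (hxy_off : ∀ k, k ≠ i → x k = y k)
    (hxy_adj : ∃ u v : Fin q, u ≠ v ∧ x i = adjTrans u v (y i))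
    (hxy_ne : x i ≠ y i)
    (hzy_off : ∀ k, k ≠ j → z k = y k)
    (hzy_adj : ∃ u v : Fin q, u ≠ v ∧ z j = adjTrans u v (y j))
    (hzy_ne : z j ≠ y j) :
    ∃ w : Profile n q, IsRManip f 3 w ∧
      (∀ k, k ≠ i → k ≠ j → w k = y k) ∧
      (Shifted c (x i) (w i) ∨ Shifted c (y i) (w i)) ∧
      (Shifted a (z j) (w j) ∨ Shifted a (y j) (w j)) := by
  classical
  have vne : ∀ (Y : Ranking q) (e e' : Fin q), e ≠ e' →
      ((Y.symm e : Fin q) : ℕ) ≠ ((Y.symm e' : Fin q) : ℕ) := by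
    intro Y e e' h
    simp [Fin.val_eq_val]; exact h
  -- decompose the adjacent transpositions
  have hxdec : ∃ s t : Fin q, ((s:ℕ)+1 = (t:ℕ) ∨ (t:ℕ)+1 = (s:ℕ)) ∧
      x i = y i * Equiv.swap s t := by
    obtain ⟨u, v, huv, hxs⟩ := hxy_adj
    rw [adjTrans] at hxs
    rcases Classical.em ((((y i).symm u : ℕ) + 1 = ((y i).symm v : ℕ)) ∨
        (((y i).symm v : ℕ) + 1 = ((y i).symm u : ℕ))) with hc | hc
    · rw [if_pos hc] at hxs; exact ⟨_, _, hc, hxs⟩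
    · rw [if_neg hc] at hxs; exact absurd hxs hxy_ne
  have hzdec : ∃ s t : Fin q, ((s:ℕ)+1 = (t:ℕ) ∨ (t:ℕ)+1 = (s:ℕ)) ∧
      z j = y j * Equiv.swap s t := by
    obtain ⟨u, v, huv, hzs⟩ := hzy_adj
    rw [adjTrans] at hzs
    rcases Classical.em ((((y j).symm u : ℕ) + 1 = ((y j).symm v : ℕ)) ∨
        (((y j).symm v : ℕ) + 1 = ((y j).symm u : ℕ))) with hc | hc
    · rw [if_pos hc] at hzs; exact ⟨_, _, hc, hzs⟩
    · rw [if_neg hc] at hzs; exact absurd hzs hzy_ne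
  obtain ⟨s₁, t₁, hadj₁, hX₁⟩ := hxdec
  obtain ⟨s₂, t₂, hadj₂, hX₂⟩ := hzdec
  have hxj : x j = y j := hxy_off j (Ne.symm hij)
  have hzi : z i = y i := hzy_off i hij
  rcases side_lemma f i x y a b hab hfx hfy hxy_off s₁ t₁ hadj₁ hX₁ with hxm | hym | Hi
  · exact ⟨x, hxm, fun k hk _ => hxy_off k hk, Or.inl (shifted_refl' c _),
      Or.inr (by rw [hxj]; exact shifted_refl' a _)⟩
  · exact ⟨y, hym, fun _ _ _ => rfl, Or.inr (shifted_refl' c _),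
      Or.inr (shifted_refl' a _)⟩
  rcases side_lemma f j z y c b (Ne.symm hbc) hfz hfy hzy_off s₂ t₂ hadj₂ hX₂ with hzm | hym | Hj
  · exact ⟨z, hzm, fun k _ hk => hzy_off k hk,
      Or.inr (by rw [hzi]; exact shifted_refl' c _), Or.inl (shifted_refl' a _)⟩
  · exact ⟨y, hym, fun _ _ _ => rfl, Or.inr (shifted_refl' c _),
      Or.inr (shifted_refl' a _)⟩
  -- hard case: build the fourth corner
  obtain ⟨hKi, hXia, hXib, hXie⟩ := Hi
  obtain ⟨hKj, hZjc, hZjb, hZje⟩ := Hj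
  set v : Profile n q := fun k => if k = i then x i else if k = j then z j else y k with hv
  have hvi : v i = x i := by simp [hv]
  have hvj : v j = z j := by simp [hv, Ne.symm hij]
  have hvk : ∀ k, k ≠ i → k ≠ j → v k = y k := by
    intro k h1 h2; simp [hv, h1, h2]
  have hvx : ∀ k, k ≠ j → v k = x k := by
    intro k hk
    rcases eq_or_ne k i with rfl | h1
    · exact hvi
    · rw [hvk k h1 hk]; exact (hxy_off k h1).symm
  have hvz : ∀ k, k ≠ i → v k = z k := by
    intro k hk
    rcases eq_or_ne k j with rfl | h1
    · exact hvj
    · rw [hvk k hk h1]; exact (hzy_off k h1).symm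
  rcases eq_or_ne (f v) a with hda | hda
  · -- f v = a : use the edge between z and v (coordinate i)
    have hne : ((y i).symm a : ℕ) ≠ ((y i).symm c : ℕ) := vne _ _ _ hac
    rcases lt_or_gt_of_ne hne with h | h
    · -- z is a manipulation point
      refine ⟨z, ⟨i, v, hvz, ?_, ?_⟩, fun k _ hk => hzy_off k hk,
        Or.inr (by rw [hzi]; exact shifted_refl' c _), Or.inl (shifted_refl' a _)⟩
      · rw [hvi, hzi, hX₁]; exact adjblock3 (y i) s₁ t₁ hadj₁
      · rw [hfz, hda, hzi]
        show (y i).symm a < (y i).symm c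
        exact Fin.lt_def.mpr h
    · -- v is a manipulation point
      refine ⟨v, ⟨i, z, fun k hk => (hvz k hk).symm, ?_, ?_⟩, hvk,
        Or.inl (by rw [hvi]; exact shifted_refl' c _),
        Or.inl (by rw [hvj]; exact shifted_refl' a _)⟩
      · rw [hvi, hzi, hX₁]; exact adjblock3' (y i) s₁ t₁ hadj₁
      · rw [hfz, hda, hvi]
        show (x i).symm c < (x i).symm a
        rw [Fin.lt_def]
        have h1 : ((x i).symm c : ℕ) = ((y i).symm c : ℕ) :=
          hXie c (Ne.symm hac) (Ne.symm hbc)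
        have h2 : ((y i).symm c : ℕ) ≠ ((y i).symm b : ℕ) := vne _ _ _ (Ne.symm hbc)
        omega
  · -- f v ≠ a : use the edge between x and v (coordinate j)
    have hne : ((y j).symm (f v) : ℕ) ≠ ((y j).symm a : ℕ) := vne _ _ _ hda
    rcases lt_or_gt_of_ne hne with h | h
    · -- x is a manipulation point
      refine ⟨x, ⟨j, v, hvx, ?_, ?_⟩, fun k hk _ => hxy_off k hk,
        Or.inl (shifted_refl' c _), Or.inr (by rw [hxj]; exact shifted_refl' a _)⟩
      · rw [hvj, hxj, hX₂]; exact adjblock3 (y j) s₂ t₂ hadj₂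
      · rw [hfx, hxj]
        show (y j).symm (f v) < (y j).symm a
        exact Fin.lt_def.mpr h
    · -- v is a manipulation point
      refine ⟨v, ⟨j, x, fun k hk => (hvx k hk).symm, ?_, ?_⟩, hvk,
        Or.inl (by rw [hvi]; exact shifted_refl' c _),
        Or.inl (by rw [hvj]; exact shifted_refl' a _)⟩
      · rw [hvj, hxj, hX₂]; exact adjblock3' (y j) s₂ t₂ hadj₂
      · rw [hfx, hvj]
        show (z j).symm a < (z j).symm (f v)
        rw [Fin.lt_def]
        have ha' : ((z j).symm a : ℕ) = ((y j).symm a : ℕ) := hZje a hac hab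
        rcases eq_or_ne (f v) b with hdb | hdb
        · rw [hdb] at h ⊢
          have hba : ((y j).symm a : ℕ) ≠ ((y j).symm b : ℕ) := vne _ _ _ hab
          omega
        · rcases eq_or_ne (f v) c with hdc | hdc
          · rw [hdc] at h ⊢
            have hba : ((y j).symm a : ℕ) ≠ ((y j).symm b : ℕ) := vne _ _ _ hab
            omega
          · have hd' : ((z j).symm (f v) : ℕ) = ((y j).symm (f v) : ℕ) :=
              hZje (f v) hdc hdb
            omega
end

section
/- Fix q ≥ 3 and let f : L_q^n → [q] satisfy Dist(f, NONMANIP) ≥ ε. Then either P(f is 2-manipulable at X) ≥ 4ε/(n q⁷) for X uniform on L_q^n, or there exist distinct i,j ∈ [n] and pairs {a,b}, {c,d} ⊆ [q] with c ∉ {a,b}, such that Inf_i^{a,b;[a:b]}(f) ≥ 2ε/(n q⁷) and Inf_j^{c,d;[c:d]}(f) ≥ 2ε/(n q⁷). -/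
open Finset
open scoped Classical

section AuxProofs
variable {α β : Type*} [Fintype α] [Fintype β]

lemma prob_def (P : α → Prop) [DecidablePred P] :
    prob P = ((Finset.univ.filter P).card : ℝ) / (Fintype.card α : ℝ) := by
  unfold prob
  congr 1
  norm_cast
  apply Finset.card_bij (fun a _ => a) <;> simp

lemma prob_nonneg (P : α → Prop) : 0 ≤ prob P := by unfold prob; positivity

lemma prob_congr {P Q : α → Prop} (h : ∀ a, P a ↔ Q a) : prob P = prob Q := by
  rw [prob_def, prob_def]
  have : univ.filter P = univ.filter Q := Finset.filter_congr fun a _ => by simpa using h a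
  rw [this]

lemma prob_mono {P Q : α → Prop} (h : ∀ a, P a → Q a) : prob P ≤ prob Q := by
  rw [prob_def, prob_def, div_eq_mul_inv, div_eq_mul_inv]
  refine mul_le_mul_of_nonneg_right ?_ (by positivity)
  have : univ.filter P ⊆ univ.filter Q := by
    intro a ha
    simp only [Finset.mem_filter, Finset.mem_univ, true_and] at ha ⊢
    exact h a ha
  exact_mod_cast Finset.card_le_card this

lemma prob_or_le (P Q : α → Prop) : prob (fun a => P a ∨ Q a) ≤ prob P + prob Q := by
  rw [prob_def, prob_def, prob_def, ← add_div, div_eq_mul_inv, div_eq_mul_inv]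
  refine mul_le_mul_of_nonneg_right ?_ (by positivity)
  rw [Finset.filter_or]
  calc ((univ.filter P ∪ univ.filter Q).card : ℝ)
      ≤ (((univ.filter P).card + (univ.filter Q).card : ℕ) : ℝ) := by
        exact_mod_cast Finset.card_union_le _ _
    _ = _ := by push_cast; ring

lemma prob_le_sum {ι : Type*} (s : Finset ι) (P : α → Prop) (Q : ι → α → Prop)
    (h : ∀ a, P a → ∃ i ∈ s, Q i a) :
    prob P ≤ ∑ i ∈ s, prob (Q i) := by
  have hq : ∀ i ∈ s, prob (Q i) = ((univ.filter (Q i)).card : ℝ) / (Fintype.card α : ℝ) :=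
    fun i _ => prob_def _
  rw [prob_def, Finset.sum_congr rfl hq, ← Finset.sum_div, div_eq_mul_inv, div_eq_mul_inv]
  refine mul_le_mul_of_nonneg_right ?_ (by positivity)
  have hsub : univ.filter P ⊆ s.biUnion (fun i => univ.filter (Q i)) := by
    intro a ha
    simp only [Finset.mem_filter, Finset.mem_univ, true_and] at ha
    obtain ⟨i, hi, hq2⟩ := h a ha
    exact Finset.mem_biUnion.mpr ⟨i, hi, by simp [hq2]⟩
  calc ((univ.filter P).card : ℝ)
      ≤ ((s.biUnion fun i => univ.filter (Q i)).card : ℝ) := by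
        exact_mod_cast Finset.card_le_card hsub
    _ ≤ _ := by exact_mod_cast Finset.card_biUnion_le

lemma sum_prob_le {ι : Type*} (s : Finset ι) (P : α → Prop) (Q : ι → α → Prop)
    (hsub : ∀ i ∈ s, ∀ a, Q i a → P a)
    (hdisj : ∀ i ∈ s, ∀ j ∈ s, i ≠ j → ∀ a, Q i a → Q j a → False) :
    ∑ i ∈ s, prob (Q i) ≤ prob P := by
  have hq : ∀ i ∈ s, prob (Q i) = ((univ.filter (Q i)).card : ℝ) / (Fintype.card α : ℝ) :=
    fun i _ => prob_def _
  rw [prob_def, Finset.sum_congr rfl hq, ← Finset.sum_div, div_eq_mul_inv, div_eq_mul_inv]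
  refine mul_le_mul_of_nonneg_right ?_ (by positivity)
  have hd : ∀ i ∈ s, ∀ j ∈ s, i ≠ j →
      Disjoint (univ.filter (Q i)) (univ.filter (Q j)) := by
    intro i hi j hj hij
    rw [Finset.disjoint_left]
    intro a hai haj
    simp only [Finset.mem_filter, Finset.mem_univ, true_and] at hai haj
    exact hdisj i hi j hj hij a hai haj
  have hcard := Finset.card_biUnion hd
  have hsub2 : s.biUnion (fun i => univ.filter (Q i)) ⊆ univ.filter P := by
    intro a ha
    obtain ⟨i, hi, hai⟩ := Finset.mem_biUnion.mp ha
    simp only [Finset.mem_filter, Finset.mem_univ, true_and] at hai ⊢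
    exact hsub i hi a hai
  calc (∑ i ∈ s, ((univ.filter (Q i)).card : ℝ))
      = (((s.biUnion fun i => univ.filter (Q i)).card : ℕ) : ℝ) := by
        rw [hcard]; push_cast; ring
    _ ≤ _ := by exact_mod_cast Finset.card_le_card hsub2

lemma prob_equiv (σ : α ≃ α) (P : α → Prop) : prob (fun a => P (σ a)) = prob P := by
  rw [prob_def, prob_def]
  congr 1
  norm_cast
  refine Finset.card_bij (fun a _ => σ a) ?_ ?_ ?_
  · intro a ha
    simp only [Finset.mem_filter, Finset.mem_univ, true_and] at ha ⊢
    exact ha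
  · intro a₁ _ a₂ _ h
    exact σ.injective h
  · intro b hb
    simp only [Finset.mem_filter, Finset.mem_univ, true_and] at hb
    exact ⟨σ.symm b, by simp [hb], by simp⟩

lemma prob_push (φ : α → β) (m : ℕ) (hm : ∀ b, (univ.filter fun a => φ a = b).card = m)
    (hm0 : 0 < m) (P : β → Prop) :
    prob (fun a => P (φ a)) = prob P := by
  have h1 : (univ.filter fun a => P (φ a)).card = m * (univ.filter P).card := by
    rw [Finset.card_eq_sum_card_fiberwise (f := φ) (t := univ.filter P)
      (fun a ha => by simpa using ha)]
    rw [Finset.sum_congr rfl (fun b hb => ?_), Finset.sum_const, smul_eq_mul, mul_comm]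
    have hPb : P b := by simpa using (Finset.mem_filter.mp hb).2
    have heq : (univ.filter fun a => P (φ a)).filter (fun a => φ a = b)
        = univ.filter (fun a => φ a = b) := by
      ext a
      simp only [Finset.mem_filter, Finset.mem_univ, true_and]
      constructor
      · rintro ⟨_, h2⟩; exact h2
      · intro h2; exact ⟨by rw [h2]; exact hPb, h2⟩
    rw [heq, hm b]
  have h2 : Fintype.card α = m * Fintype.card β := by
    have h3 := Finset.card_eq_sum_card_fiberwise
      (s := (univ : Finset α)) (f := φ) (t := (univ : Finset β)) (by simp)
    rw [← Finset.card_univ, h3]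
    rw [Finset.sum_congr rfl (fun b _ => hm b), Finset.sum_const, smul_eq_mul,
      Finset.card_univ, mul_comm]
  rw [prob_def, prob_def, h1, h2]
  push_cast
  rw [mul_div_mul_left]
  exact_mod_cast hm0.ne'

lemma prob_fst_and_snd (P : α → Prop) (Q : β → Prop) :
    prob (fun p : α × β => P p.1 ∧ Q p.2) = prob P * prob Q := by
  rw [prob_def, prob_def, prob_def]
  have h1 : (univ : Finset (α × β)).filter (fun p => P p.1 ∧ Q p.2)
      = (univ.filter P) ×ˢ (univ.filter Q) := by
    rw [← Finset.univ_product_univ, Finset.filter_product]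
  rw [h1, Finset.card_product, Fintype.card_prod]
  push_cast
  rw [div_mul_div_comm]

lemma prob_not [Nonempty α] (P : α → Prop) : prob (fun a => ¬ P a) = 1 - prob P := by
  rw [prob_def, prob_def, Finset.filter_not, Finset.card_sdiff_of_subset (Finset.filter_subset _ _)]
  have hle : (univ.filter P).card ≤ (univ : Finset α).card := Finset.card_filter_le _ _
  have hpos : (0:ℝ) < (Fintype.card α : ℝ) := by exact_mod_cast Fintype.card_pos
  rw [Nat.cast_sub hle, Finset.card_univ, sub_div, div_self hpos.ne']

lemma prob_prod_avg [Nonempty α] [Nonempty β] (P : α × β → Prop) :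
    prob P = (∑ b : β, prob fun a => P (a, b)) / (Fintype.card β : ℝ) := by
  have h1 : ((univ : Finset (α × β)).filter P).card
      = ∑ b : β, (univ.filter fun a => P (a, b)).card := by
    rw [Finset.card_eq_sum_card_fiberwise (f := Prod.snd) (t := (univ : Finset β)) (by simp)]
    refine Finset.sum_congr rfl fun b _ => ?_
    refine Finset.card_bij (fun p _ => p.1) ?_ ?_ ?_
    · intro p hp
      simp only [Finset.mem_filter, Finset.mem_univ, true_and] at hp ⊢
      rw [show ((p.1 : α), b) = p by rw [← hp.2]]
      exact hp.1
    · intro p1 hp1 p2 hp2 h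
      simp only [Finset.mem_filter, Finset.mem_univ, true_and] at hp1 hp2
      exact Prod.ext h (hp1.2.trans hp2.2.symm)
    · intro a ha
      simp only [Finset.mem_filter, Finset.mem_univ, true_and] at ha
      exact ⟨(a, b), by simp [ha], rfl⟩
  have hq : ∀ b ∈ (univ : Finset β), prob (fun a => P (a, b))
      = ((univ.filter (fun a => P (a, b))).card : ℝ) / (Fintype.card α : ℝ) :=
    fun b _ => prob_def _
  rw [prob_def, Finset.sum_congr rfl hq, h1, Fintype.card_prod]
  push_cast
  rw [Finset.sum_div, Finset.sum_div]
  refine Finset.sum_congr rfl fun b _ => ?_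
  rw [div_div]

lemma exists_le_avg {ι : Type*} {s : Finset ι} (hs : s.Nonempty) (g : ι → ℝ) :
    ∃ i ∈ s, g i ≤ (∑ j ∈ s, g j) / (s.card : ℝ) := by
  by_contra hcon
  push_neg at hcon
  have hlt : ∑ j ∈ s, (∑ j ∈ s, g j) / (s.card : ℝ) < ∑ j ∈ s, g j :=
    Finset.sum_lt_sum_of_nonempty hs hcon
  rw [Finset.sum_const, nsmul_eq_mul] at hlt
  have hpos : (0:ℝ) < (s.card : ℝ) := by exact_mod_cast Finset.card_pos.mpr hs
  rw [mul_div_cancel₀ _ hpos.ne'] at hlt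
  exact lt_irrefl _ hlt

lemma exists_ge_of_sum_ge {ι : Type*} {s : Finset ι} {g : ι → ℝ} {S N : ℝ}
    (hN : 0 < N) (hcard : (s.card : ℝ) ≤ N) (hS : 0 < S) (hsum : S ≤ ∑ i ∈ s, g i) :
    ∃ i ∈ s, S / N ≤ g i := by
  by_contra hcon
  push_neg at hcon
  rcases s.eq_empty_or_nonempty with he | hne
  · rw [he, Finset.sum_empty] at hsum; linarith
  have hlt : ∑ i ∈ s, g i < ∑ i ∈ s, S / N := Finset.sum_lt_sum_of_nonempty hne hcon
  rw [Finset.sum_const, nsmul_eq_mul] at hlt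
  have hle2 : (s.card : ℝ) * (S / N) ≤ N * (S / N) :=
    mul_le_mul_of_nonneg_right hcard (by positivity)
  rw [mul_div_cancel₀ _ hN.ne'] at hle2
  linarith




noncomputable def sw (q : ℕ) (p : ℕ) : Ranking q :=
  if h : p + 1 < q then Equiv.swap ⟨p, Nat.lt_of_succ_lt h⟩ ⟨p + 1, h⟩ else 1

lemma sw_mul_self (q p : ℕ) : sw q p * sw q p = 1 := by
  unfold sw; split_ifs with h
  · exact Equiv.swap_mul_self _ _
  · simp

lemma sw_apply_lt (q p : ℕ) (h : p + 1 < q) :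
    sw q p ⟨p, Nat.lt_of_succ_lt h⟩ = ⟨p + 1, h⟩ := by
  unfold sw; rw [dif_pos h]; exact Equiv.swap_apply_left _ _

lemma sw_apply_gt (q p : ℕ) (h : p + 1 < q) :
    sw q p ⟨p + 1, h⟩ = ⟨p, Nat.lt_of_succ_lt h⟩ := by
  unfold sw; rw [dif_pos h]; exact Equiv.swap_apply_right _ _

lemma sw_apply_of_ne (q p : ℕ) (k : Fin q) (h1 : (k : ℕ) ≠ p) (h2 : (k : ℕ) ≠ p + 1) :
    sw q p k = k := by
  unfold sw; split_ifs with h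
  · exact Equiv.swap_apply_of_ne_of_ne (fun hk => h1 (by simpa using congrArg Fin.val hk))
      (fun hk => h2 (by simpa using congrArg Fin.val hk))
  · rfl

lemma sw_val (q p : ℕ) (h : p + 1 < q) (k : Fin q) :
    ((sw q p k : Fin q) : ℕ) = if (k : ℕ) = p then p + 1 else if (k : ℕ) = p + 1 then p else k := by
  split_ifs with h1 h2
  · have hk : k = ⟨p, Nat.lt_of_succ_lt h⟩ := Fin.ext h1
    rw [hk, sw_apply_lt q p h]
  · have hk : k = ⟨p + 1, h⟩ := Fin.ext h2
    rw [hk, sw_apply_gt q p h]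
  · rw [sw_apply_of_ne q p k h1 h2]

noncomputable def invs {q : ℕ} (h : Ranking q) : Finset (Fin q × Fin q) :=
  univ.filter fun kl => kl.1 < kl.2 ∧ h kl.2 < h kl.1

lemma invs_card_le {q : ℕ} (h : Ranking q) : (invs h).card ≤ q * q := by
  calc (invs h).card ≤ (univ : Finset (Fin q × Fin q)).card := Finset.card_filter_le _ _
    _ = q * q := by simp

lemma strictMono_perm_eq_one {q : ℕ} (h : Ranking q) (hm : StrictMono (⇑h)) : h = 1 := by
  have hsymmmono : StrictMono (⇑h.symm) := by
    intro a b hab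
    rcases lt_trichotomy (h.symm a) (h.symm b) with hlt | heq | hgt
    · exact hlt
    · exfalso
      have : a = b := by
        have := congrArg h heq
        simpa using this
      rw [this] at hab; exact lt_irrefl _ hab
    · exfalso
      have h2 := hm hgt
      simp only [Equiv.apply_symm_apply] at h2
      exact absurd hab (not_lt.mpr h2.le)
  have le_ap : ∀ (g : Ranking q), StrictMono (⇑g) → ∀ m (k : Fin q), (k : ℕ) = m → m ≤ (g k : ℕ) := by
    intro g hg m
    induction m with
    | zero => intro k _; omega
    | succ m ih =>
      intro k hk
      have hm' : m < q := by omega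
      have hk' : (⟨m, hm'⟩ : Fin q) < k := by rw [Fin.lt_def]; simp [hk]
      have h1 := hg hk'
      have h2 := ih ⟨m, hm'⟩ rfl
      rw [Fin.lt_def] at h1
      omega
  have key : ∀ k : Fin q, h k = k := by
    intro k
    have h1 : (k : ℕ) ≤ (h k : ℕ) := le_ap h hm _ k rfl
    have h2 : ((h k : Fin q) : ℕ) ≤ (h.symm (h k) : ℕ) := le_ap h.symm hsymmmono _ (h k) rfl
    rw [Equiv.symm_apply_apply] at h2
    exact Fin.ext (by omega)
  exact Equiv.ext key

lemma sorted_eq_one {q : ℕ} (h : Ranking q)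
    (hsort : ∀ p (hp : p + 1 < q), h ⟨p, Nat.lt_of_succ_lt hp⟩ < h ⟨p + 1, hp⟩) : h = 1 := by
  apply strictMono_perm_eq_one
  have key : ∀ m, ∀ a b : Fin q, (b : ℕ) = (a : ℕ) + m + 1 → h a < h b := by
    intro m
    induction m with
    | zero =>
      intro a b hab
      have hp : (a : ℕ) + 1 < q := by have := b.isLt; omega
      have ha : a = ⟨(a : ℕ), Nat.lt_of_succ_lt hp⟩ := Fin.ext rfl
      have hb : b = ⟨(a : ℕ) + 1, hp⟩ := Fin.ext (by simp only [Fin.val_mk]; omega)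
      rw [ha, hb]; exact hsort _ hp
    | succ m ih =>
      intro a b hab
      have hp : (a : ℕ) + m + 1 + 1 < q := by have := b.isLt; omega
      have hc : ((⟨(a : ℕ) + m + 1, Nat.lt_of_succ_lt hp⟩ : Fin q) : ℕ) = (a : ℕ) + m + 1 := rfl
      have h1 : h a < h ⟨(a : ℕ) + m + 1, Nat.lt_of_succ_lt hp⟩ := ih a _ hc
      have h2 : h ⟨(a : ℕ) + m + 1, Nat.lt_of_succ_lt hp⟩ < h b := by
        have hb : b = ⟨(a : ℕ) + m + 1 + 1, hp⟩ := Fin.ext (by simp only [Fin.val_mk]; omega)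
        rw [hb]
        exact hsort _ hp
      exact h1.trans h2
  intro a b hab
  rw [Fin.lt_def] at hab
  exact key ((b : ℕ) - (a : ℕ) - 1) a b (by omega)

lemma invs_mul_sw_lt {q : ℕ} (h : Ranking q) (p : ℕ) (hp : p + 1 < q)
    (hinv : h ⟨p + 1, hp⟩ < h ⟨p, Nat.lt_of_succ_lt hp⟩) :
    (invs (h * sw q p)).card < (invs h).card := by
  set P : Fin q := ⟨p, Nat.lt_of_succ_lt hp⟩
  set P1 : Fin q := ⟨p + 1, hp⟩
  have hmem : (P, P1) ∈ invs h := by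
    simp only [invs, Finset.mem_filter, Finset.mem_univ, true_and]
    exact ⟨by rw [Fin.lt_def]; simp [P, P1], hinv⟩
  have hsub : ∀ kl ∈ invs (h * sw q p), (sw q p kl.1, sw q p kl.2) ∈ (invs h).erase (P, P1) := by
    rintro ⟨k, l⟩ hkl
    simp only [invs, Finset.mem_filter, Finset.mem_univ, true_and] at hkl
    obtain ⟨hlt, hvlt⟩ := hkl
    simp only [Equiv.Perm.mul_apply] at hvlt
    have hne : ¬(k = P ∧ l = P1) := by
      rintro ⟨hk, hl⟩
      rw [hk, hl, sw_apply_lt q p hp, sw_apply_gt q p hp] at hvlt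
      exact absurd hinv (not_lt.mpr hvlt.le)
    have hklt : sw q p k < sw q p l := by
      rw [Fin.lt_def] at hlt ⊢
      rw [sw_val q p hp k, sw_val q p hp l]
      have hkq := k.isLt
      have hlq := l.isLt
      have hknep : ¬((k : ℕ) = p ∧ (l : ℕ) = p + 1) := by
        rintro ⟨h1, h2⟩
        exact hne ⟨Fin.ext h1, Fin.ext h2⟩
      split_ifs <;> omega
    rw [Finset.mem_erase]
    constructor
    · rintro heq
      have h1 : sw q p k = P := congrArg Prod.fst heq
      have h2 : sw q p l = P1 := congrArg Prod.snd heq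
      have hk : k = sw q p P := by rw [← h1, ← Equiv.Perm.mul_apply, sw_mul_self]; rfl
      have hl : l = sw q p P1 := by rw [← h2, ← Equiv.Perm.mul_apply, sw_mul_self]; rfl
      rw [sw_apply_lt q p hp] at hk
      rw [sw_apply_gt q p hp] at hl
      rw [hk, hl, Fin.lt_def] at hlt
      simp [P, P1] at hlt
    · simp only [invs, Finset.mem_filter, Finset.mem_univ, true_and]
      exact ⟨hklt, hvlt⟩
  have hinj : Set.InjOn (fun kl : Fin q × Fin q => (sw q p kl.1, sw q p kl.2)) (invs (h * sw q p)) := by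
    rintro ⟨k, l⟩ _ ⟨k', l'⟩ _ heq
    have h1 : sw q p k = sw q p k' := congrArg Prod.fst heq
    have h2 : sw q p l = sw q p l' := congrArg Prod.snd heq
    exact Prod.ext ((sw q p).injective h1) ((sw q p).injective h2)
  calc (invs (h * sw q p)).card ≤ ((invs h).erase (P, P1)).card :=
        Finset.card_le_card_of_injOn _ hsub hinj
    _ < (invs h).card := by
        rw [Finset.card_erase_of_mem hmem]
        have : 0 < (invs h).card := Finset.card_pos.mpr ⟨_, hmem⟩
        omega

lemma exists_word_aux {q : ℕ} : ∀ m (h : Ranking q), (invs h).card ≤ m →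
    ∃ l : List ℕ, l.length ≤ m ∧ (∀ p ∈ l, p + 1 < q) ∧ (l.map (sw q)).prod = h := by
  intro m
  induction m with
  | zero =>
    intro h hcard
    have h1 : h = 1 := by
      apply sorted_eq_one
      intro p hp
      by_contra hcon
      have hne : h ⟨p, Nat.lt_of_succ_lt hp⟩ ≠ h ⟨p + 1, hp⟩ := by
        intro heq
        have := h.injective heq
        have := congrArg Fin.val this
        simp at this
      have hlt : h ⟨p + 1, hp⟩ < h ⟨p, Nat.lt_of_succ_lt hp⟩ := by
        rcases lt_trichotomy (h ⟨p, Nat.lt_of_succ_lt hp⟩) (h ⟨p + 1, hp⟩) with h1 | h2 | h3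
        · exact absurd h1 hcon
        · exact absurd h2 hne
        · exact h3
      have hmem : ((⟨p, Nat.lt_of_succ_lt hp⟩ : Fin q), (⟨p + 1, hp⟩ : Fin q)) ∈ invs h := by
        simp only [invs, Finset.mem_filter, Finset.mem_univ, true_and]
        exact ⟨by rw [Fin.lt_def]; simp, hlt⟩
      have := Finset.card_pos.mpr ⟨_, hmem⟩
      omega
    exact ⟨[], by simp, by simp, by simp [h1]⟩
  | succ m ih =>
    intro h hcard
    by_cases hsort : ∀ p (hp : p + 1 < q), h ⟨p, Nat.lt_of_succ_lt hp⟩ < h ⟨p + 1, hp⟩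
    · exact ⟨[], by simp, by simp, by simp [sorted_eq_one h hsort]⟩
    · push_neg at hsort
      obtain ⟨p, hp, hnlt⟩ := hsort
      have hne : h ⟨p + 1, hp⟩ ≠ h ⟨p, Nat.lt_of_succ_lt hp⟩ := by
        intro heq
        have := h.injective heq
        have := congrArg Fin.val this
        simp at this
      have hinv : h ⟨p + 1, hp⟩ < h ⟨p, Nat.lt_of_succ_lt hp⟩ := by
        rcases lt_or_eq_of_le hnlt with h1 | h2
        · exact h1
        · exact absurd h2 hne
      have hdec := invs_mul_sw_lt h p hp hinv
      obtain ⟨l, hlen, hmem, hprod⟩ := ih (h * sw q p) (by omega)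
      refine ⟨l ++ [p], ?_, ?_, ?_⟩
      · simp; omega
      · intro r hr
        rcases List.mem_append.mp hr with h1 | h2
        · exact hmem r h1
        · simp at h2; omega
      · rw [List.map_append, List.prod_append, hprod]
        simp only [List.map_cons, List.map_nil, List.prod_cons, List.prod_nil, mul_one]
        rw [mul_assoc, sw_mul_self, mul_one]

lemma exists_word {q : ℕ} (h : Ranking q) :
    ∃ l : List ℕ, l.length ≤ q * q ∧ (∀ p ∈ l, p + 1 < q) ∧ (l.map (sw q)).prod = h :=
  exists_word_aux (q * q) h (invs_card_le h)

section Machinery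
variable {n q : ℕ}

/-- right multiplication on one coordinate, an equiv of profiles -/
noncomputable def coordMul (j : Fin n) (g : Ranking q) : Profile n q ≃ Profile n q where
  toFun x := Function.update x j (x j * g)
  invFun x := Function.update x j (x j * g⁻¹)
  left_inv x := by
    simp only [Function.update_idem, Function.update_self, mul_inv_cancel_right,
      Function.update_eq_self]
  right_inv x := by
    simp only [Function.update_idem, Function.update_self, inv_mul_cancel_right,
      Function.update_eq_self]

lemma coordMul_apply (j : Fin n) (g : Ranking q) (x : Profile n q) :
    coordMul j g x = Function.update x j (x j * g) := rfl

variable (f : Profile n q → Fin q)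

/-- conforming boundary event at coordinate `j`, positions `p, p+1`, values `a → b` -/
def CEv (j : Fin n) (p : ℕ) (a b : Fin q) (x : Profile n q) : Prop :=
  f x = a ∧ f (Function.update x j (x j * sw q p)) = b ∧
    ((((x j).symm a : ℕ) = p ∧ ((x j).symm b : ℕ) = p + 1) ∨
     (((x j).symm b : ℕ) = p ∧ ((x j).symm a : ℕ) = p + 1))

noncomputable def edgeP (ρ : Fin q → Fin q → Prop) (j : Fin n) (p : ℕ) : ℝ :=
  prob fun x : Profile n q => ρ (f x) (f (Function.update x j (x j * sw q p)))

lemma sw_sw (p : ℕ) (u : Fin q) : sw q p (sw q p u) = u := by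
  rw [← Equiv.Perm.mul_apply, sw_mul_self, Equiv.Perm.one_apply]

/-- THE key pointwise lemma: a disagreeing refined edge yields a 2-manipulation point
or a conforming boundary event. -/
lemma manip_or_conf (j : Fin n) (p : ℕ) (x : Profile n q)
    (hne : f x ≠ f (Function.update x j (x j * sw q p))) :
    IsRManip f 2 x ∨ IsRManip f 2 (Function.update x j (x j * sw q p)) ∨
      CEv f j p (f x) (f (Function.update x j (x j * sw q p))) x := by
  set z := Function.update x j (x j * sw q p) with hz
  by_cases hp : p + 1 < q
  swap
  · exfalso
    apply hne
    rw [hz]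
    unfold sw
    rw [dif_neg hp, mul_one, Function.update_eq_self]
  set a := f x with ha
  set b := f z with hb
  have hab : a ≠ b := hne
  have hzj : z j = x j * sw q p := Function.update_self _ _ _
  have hzsymm : ∀ c : Fin q, (z j).symm c = sw q p ((x j).symm c) := by
    intro c
    rw [Equiv.symm_apply_eq, hzj, Equiv.Perm.mul_apply, sw_sw, Equiv.apply_symm_apply]
  set A := (((x j).symm a : Fin q) : ℕ) with hA
  set B := (((x j).symm b : Fin q) : ℕ) with hB
  have hABne : A ≠ B := by
    intro hval
    exact hab ((x j).symm.injective (Fin.ext hval))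
  by_cases hconf : (A = p ∧ B = p + 1) ∨ (B = p ∧ A = p + 1)
  · exact Or.inr (Or.inr ⟨rfl, rfl, hconf⟩)
  have hA' : (((z j).symm a : Fin q) : ℕ)
      = if A = p then p + 1 else if A = p + 1 then p else A := by
    rw [hzsymm, sw_val q p hp]
  have hB' : (((z j).symm b : Fin q) : ℕ)
      = if B = p then p + 1 else if B = p + 1 then p else B := by
    rw [hzsymm, sw_val q p hp]
  rw [not_or] at hconf
  obtain ⟨hc1, hc2⟩ := hconf
  have hAq : A < q := ((x j).symm a).isLt
  have hBq : B < q := ((x j).symm b).isLt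
  have hpres : A < B ↔ (((z j).symm a : Fin q) : ℕ) < (((z j).symm b : Fin q) : ℕ) := by
    rw [hA', hB']
    have h1 : ¬(A = p ∧ B = p + 1) := hc1
    have h2 : ¬(B = p ∧ A = p + 1) := hc2
    split_ifs <;> omega
  have hwin : ∀ k : Fin q, ¬ (p ≤ (k : ℕ) ∧ (k : ℕ) < p + 2) → (z j) k = (x j) k := by
    intro k hk
    rw [hzj, Equiv.Perm.mul_apply, sw_apply_of_ne q p k (by omega) (by omega)]
  rcases lt_trichotomy A B with hAB | hAB | hAB
  · -- A < B : x j prefers a over b; z is a manipulation point (deviate back to x)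
    refine Or.inr (Or.inl ⟨j, x, ?_, ?_, ?_⟩)
    · intro k hk
      exact (Function.update_of_ne hk _ _).symm
    · exact ⟨p, fun k hk => (hwin k hk).symm⟩
    · show Prefers (z j) (f x) (f z)
      unfold Prefers
      rw [Fin.lt_def]
      exact hpres.mp hAB
  · exact absurd hAB hABne
  · -- B < A : x j prefers b over a; x is a manipulation point
    refine Or.inl ⟨j, z, ?_, ?_, ?_⟩
    · intro k hk
      exact Function.update_of_ne hk _ _
    · exact ⟨p, hwin⟩
    · show Prefers (x j) (f z) (f x)
      unfold Prefers
      rw [Fin.lt_def]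
      exact hAB
  
lemma CEv_imp (j : Fin n) (p : ℕ) (a b : Fin q) (x : Profile n q) (h : CEv f j p a b x) :
    f x = a ∧ f (Function.update x j (adjTrans a b (x j))) = b := by
  obtain ⟨h1, h2, h3⟩ := h
  have hadj : adjTrans a b (x j) = x j * sw q p := by
    unfold adjTrans
    have hcond : (((x j).symm a : ℕ) + 1 = ((x j).symm b : ℕ)
        ∨ ((x j).symm b : ℕ) + 1 = ((x j).symm a : ℕ)) := by
      rcases h3 with ⟨hA, hB⟩ | ⟨hB, hA⟩
      · left; omega
      · right; omega
    rw [if_pos hcond]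
    congr 1
    have hp : p + 1 < q := by
      rcases h3 with ⟨hA, hB⟩ | ⟨hB, hA⟩
      · have := ((x j).symm b).isLt; omega
      · have := ((x j).symm a).isLt; omega
    unfold sw
    rw [dif_pos hp]
    rcases h3 with ⟨hA, hB⟩ | ⟨hB, hA⟩
    · rw [show (x j).symm a = ⟨p, Nat.lt_of_succ_lt hp⟩ from Fin.ext hA,
        show (x j).symm b = ⟨p + 1, hp⟩ from Fin.ext hB]
    · rw [show (x j).symm b = ⟨p, Nat.lt_of_succ_lt hp⟩ from Fin.ext hB,
        show (x j).symm a = ⟨p + 1, hp⟩ from Fin.ext hA]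
      exact Equiv.swap_comm _ _
  rw [hadj]
  exact ⟨h1, h2⟩

lemma CEv_disj (j : Fin n) (a b : Fin q) (p p' : ℕ) (x : Profile n q)
    (h : CEv f j p a b x) (h' : CEv f j p' a b x) : p = p' := by
  obtain ⟨_, _, h3⟩ := h
  obtain ⟨_, _, h3'⟩ := h'
  rcases h3 with ⟨hA, hB⟩ | ⟨hB, hA⟩ <;> rcases h3' with ⟨hA', hB'⟩ | ⟨hB', hA'⟩ <;> omega

lemma conf_sum (j : Fin n) (a b : Fin q) :
    ∑ p ∈ Finset.range (q - 1), prob (CEv f j p a b) ≤ 2 * infABadj f j a b := by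
  have h2 : 2 * infABadj f j a b = prob (fun x : Profile n q =>
      f x = a ∧ f (Function.update x j (adjTrans a b (x j))) = b) := by
    unfold infABadj; ring
  rw [h2]
  apply sum_prob_le
  · intro p _ x hx
    exact CEv_imp f j p a b x hx
  · intro p _ p' _ hpp x hx hx'
    exact hpp (CEv_disj f j a b p p' x hx hx')

noncomputable def pairsOf (ρ : Fin q → Fin q → Prop) : Finset (Fin q × Fin q) :=
  univ.filter fun ab => ρ ab.1 ab.2

lemma edge_decomp (ρ : Fin q → Fin q → Prop) (hne : ∀ a b, ρ a b → a ≠ b) (j : Fin n) (p : ℕ) :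
    edgeP f ρ j p ≤ 2 * prob (fun x : Profile n q => IsRManip f 2 x)
      + ∑ ab ∈ pairsOf ρ, prob (CEv f j p ab.1 ab.2) := by
  have hstep : ∀ x : Profile n q, ρ (f x) (f (Function.update x j (x j * sw q p))) →
      (IsRManip f 2 x ∨ IsRManip f 2 (coordMul j (sw q p) x)) ∨
        (∃ ab ∈ pairsOf ρ, CEv f j p ab.1 ab.2 x) := by
    intro x hx
    rcases manip_or_conf f j p x (hne _ _ hx) with h | h | h
    · exact Or.inl (Or.inl h)
    · exact Or.inl (Or.inr (by rw [coordMul_apply]; exact h))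
    · refine Or.inr ⟨(f x, f (Function.update x j (x j * sw q p))), ?_, h⟩
      simp only [pairsOf, Finset.mem_filter, Finset.mem_univ, true_and]
      exact hx
  calc edgeP f ρ j p
      ≤ prob (fun x : Profile n q =>
          (IsRManip f 2 x ∨ IsRManip f 2 (coordMul j (sw q p) x)) ∨
            (∃ ab ∈ pairsOf ρ, CEv f j p ab.1 ab.2 x)) := prob_mono hstep
    _ ≤ prob (fun x : Profile n q =>
          IsRManip f 2 x ∨ IsRManip f 2 (coordMul j (sw q p) x))
        + prob (fun x : Profile n q => ∃ ab ∈ pairsOf ρ, CEv f j p ab.1 ab.2 x) :=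
        prob_or_le _ _
    _ ≤ (prob (fun x : Profile n q => IsRManip f 2 x)
          + prob (fun x : Profile n q => IsRManip f 2 (coordMul j (sw q p) x)))
        + ∑ ab ∈ pairsOf ρ, prob (CEv f j p ab.1 ab.2) := by
        refine add_le_add (prob_or_le _ _) ?_
        exact prob_le_sum _ _ _ (fun x hx => hx)
    _ = 2 * prob (fun x : Profile n q => IsRManip f 2 x)
        + ∑ ab ∈ pairsOf ρ, prob (CEv f j p ab.1 ab.2) := by
        rw [prob_equiv (coordMul j (sw q p)) (IsRManip f 2)]
        ring

lemma chain_exists (ρ : Fin q → Fin q → Prop) (hirr : ∀ a, ¬ ρ a a)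
    (hsplit : ∀ a c, ρ a c → ∀ b, ρ a b ∨ ρ b c) (g : ℕ → Fin q) :
    ∀ L, ρ (g 0) (g L) → ∃ r, r < L ∧ ρ (g r) (g (r + 1)) := by
  intro L
  induction L with
  | zero => intro hg; exact absurd hg (hirr _)
  | succ L ih =>
    intro hg
    by_cases hL : ρ (g 0) (g L)
    · obtain ⟨r, hr, hρ⟩ := ih hL
      exact ⟨r, by omega, hρ⟩
    · rcases hsplit _ _ hg (g L) with h | h
      · exact absurd h hL
      · exact ⟨L, by omega, h⟩

/-- the equiv (w,h) ↦ (w, w j * h) on profile × ranking -/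
noncomputable def tEquiv (j : Fin n) :
    (Profile n q × Ranking q) ≃ (Profile n q × Ranking q) where
  toFun wh := (wh.1, wh.1 j * wh.2)
  invFun wv := (wv.1, (wv.1 j)⁻¹ * wv.2)
  left_inv wh := by simp
  right_inv wv := by simp

lemma term_eq_edge (ρ : Fin q → Fin q → Prop) (j : Fin n) (g : Ranking q) (p : ℕ) :
    prob (fun w : Profile n q => ρ (f (Function.update w j (w j * g)))
        (f (Function.update w j (w j * (g * sw q p)))))
      = edgeP f ρ j p := by
  have h1 := prob_equiv (coordMul j g)
    (fun w : Profile n q => ρ (f w) (f (Function.update w j (w j * sw q p))))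
  unfold edgeP
  rw [← h1]
  apply prob_congr
  intro w
  rw [coordMul_apply, Function.update_self, Function.update_idem, mul_assoc]

lemma per_coord (ρ : Fin q → Fin q → Prop) (hirr : ∀ a, ¬ ρ a a)
    (hsplit : ∀ a c, ρ a c → ∀ b, ρ a b ∨ ρ b c) (j : Fin n) :
    prob (fun wv : Profile n q × Ranking q =>
        ρ (f wv.1) (f (Function.update wv.1 j wv.2)))
      ≤ (q : ℝ) * (q : ℝ) * ∑ p ∈ Finset.range (q - 1), edgeP f ρ j p := by
  set X := ∑ p ∈ Finset.range (q - 1), edgeP f ρ j p with hXdef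
  have hX0 : 0 ≤ X := Finset.sum_nonneg fun p _ => prob_nonneg _
  have e1 : prob (fun wv : Profile n q × Ranking q =>
        ρ (f wv.1) (f (Function.update wv.1 j wv.2)))
      = prob (fun wh : Profile n q × Ranking q =>
        ρ (f wh.1) (f (Function.update wh.1 j (wh.1 j * wh.2)))) := by
    rw [← prob_equiv (tEquiv j) (fun wv : Profile n q × Ranking q =>
      ρ (f wv.1) (f (Function.update wv.1 j wv.2)))]
    apply prob_congr
    intro wh
    simp only [tEquiv, Equiv.coe_fn_mk]
  rw [e1, prob_prod_avg]
  rw [div_le_iff₀ (by exact_mod_cast Fintype.card_pos : (0:ℝ) < (Fintype.card (Ranking q) : ℝ))]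
  have hterm : ∀ h : Ranking q, prob (fun w : Profile n q =>
      ρ (f w) (f (Function.update w j (w j * h)))) ≤ (q : ℝ) * (q : ℝ) * X := by
    intro h
    obtain ⟨l, hlen, hpl, hprod⟩ := exists_word (q := q) h
    have hchain : ∀ w : Profile n q, ρ (f w) (f (Function.update w j (w j * h))) →
        ∃ r ∈ Finset.range l.length,
          ρ (f (Function.update w j (w j * ((l.map (sw q)).take r).prod)))
            (f (Function.update w j (w j * ((l.map (sw q)).take (r + 1)).prod))) := by
      intro w hw
      have h0 : Function.update w j (w j * ((l.map (sw q)).take 0).prod) = w := by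
        simp
      have hLen : ((l.map (sw q)).take l.length).prod = h := by
        rw [show l.length = (l.map (sw q)).length from (List.length_map _).symm,
          List.take_length, hprod]
      obtain ⟨r, hr, hρ⟩ := chain_exists ρ hirr hsplit
        (fun r => f (Function.update w j (w j * ((l.map (sw q)).take r).prod))) l.length
        (by show ρ (f (Function.update w j (w j * ((l.map (sw q)).take 0).prod)))
              (f (Function.update w j (w j * ((l.map (sw q)).take l.length).prod)))
            rw [h0, hLen]; exact hw)
      exact ⟨r, Finset.mem_range.mpr hr, hρ⟩
    calc prob (fun w : Profile n q => ρ (f w) (f (Function.update w j (w j * h))))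
        ≤ ∑ r ∈ Finset.range l.length,
            prob (fun w : Profile n q =>
              ρ (f (Function.update w j (w j * ((l.map (sw q)).take r).prod)))
                (f (Function.update w j (w j * ((l.map (sw q)).take (r + 1)).prod)))) :=
          prob_le_sum _ _ _ hchain
      _ ≤ ∑ _r ∈ Finset.range l.length, X := by
          refine Finset.sum_le_sum fun r hr => ?_
          have hrl : r < l.length := Finset.mem_range.mp hr
          have hrm : r < (l.map (sw q)).length := by rw [List.length_map]; exact hrl
          have hsucc : ((l.map (sw q)).take (r + 1)).prod
              = ((l.map (sw q)).take r).prod * sw q (l[r]'hrl) := by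
            rw [List.prod_take_succ _ _ hrm]
            congr 1
            exact List.getElem_map _
          rw [hsucc, term_eq_edge f ρ j (((l.map (sw q)).take r).prod) (l[r]'hrl)]
          refine Finset.single_le_sum (f := fun p => edgeP f ρ j p)
            (fun p _ => prob_nonneg _) ?_
          rw [Finset.mem_range]
          have := hpl (l[r]'hrl) (List.getElem_mem hrl)
          omega
      _ = (l.length : ℝ) * X := by
          rw [Finset.sum_const, Finset.card_range, nsmul_eq_mul]
      _ ≤ (q : ℝ) * (q : ℝ) * X := by
          refine mul_le_mul_of_nonneg_right ?_ hX0
          calc (l.length : ℝ) ≤ ((q * q : ℕ) : ℝ) := by exact_mod_cast hlen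
            _ = (q : ℝ) * (q : ℝ) := by push_cast; ring
  calc ∑ h : Ranking q, prob (fun w : Profile n q =>
        ρ (f w) (f (Function.update w j (w j * h))))
      ≤ ∑ _h : Ranking q, (q : ℝ) * (q : ℝ) * X :=
        Finset.sum_le_sum fun h _ => hterm h
    _ = (Fintype.card (Ranking q) : ℝ) * ((q : ℝ) * (q : ℝ) * X) := by
        rw [Finset.sum_const, Finset.card_univ, nsmul_eq_mul]
    _ = (q : ℝ) * (q : ℝ) * X * (Fintype.card (Ranking q) : ℝ) := by ring

end Machinery

section Master
variable {n q : ℕ} (f : Profile n q → Fin q)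

def hyb (A : Finset (Fin n)) (x y : Profile n q) (r : ℕ) : Profile n q :=
  fun k => if k ∈ A ∧ (k : ℕ) < r then y k else x k

noncomputable def hybEquiv (A : Finset (Fin n)) (j : ℕ) :
    (Profile n q × Profile n q) ≃ (Profile n q × Profile n q) where
  toFun xy := (hyb A xy.1 xy.2 j, hyb A xy.2 xy.1 j)
  invFun xy := (hyb A xy.1 xy.2 j, hyb A xy.2 xy.1 j)
  left_inv xy := by
    refine Prod.ext ?_ ?_ <;> funext k <;>
      by_cases hk : k ∈ A ∧ (k : ℕ) < j <;> simp [hyb, hk]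
  right_inv xy := by
    refine Prod.ext ?_ ?_ <;> funext k <;>
      by_cases hk : k ∈ A ∧ (k : ℕ) < j <;> simp [hyb, hk]

lemma master (A : Finset (Fin n)) (ρ : Fin q → Fin q → Prop) (hirr : ∀ a, ¬ ρ a a)
    (hsplit : ∀ a c, ρ a c → ∀ b, ρ a b ∨ ρ b c) :
    prob (fun xy : Profile n q × Profile n q =>
        ρ (f xy.1) (f (fun k => if k ∈ A then xy.2 k else xy.1 k)))
      ≤ (q : ℝ) * (q : ℝ) * ∑ j ∈ A, ∑ p ∈ Finset.range (q - 1), edgeP f ρ j p := by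
  have hstep1 : prob (fun xy : Profile n q × Profile n q =>
      ρ (f xy.1) (f (fun k => if k ∈ A then xy.2 k else xy.1 k)))
      ≤ ∑ j ∈ A, prob (fun xy : Profile n q × Profile n q =>
          ρ (f (hyb A xy.1 xy.2 (j : ℕ))) (f (hyb A xy.1 xy.2 ((j : ℕ) + 1)))) := by
    apply prob_le_sum
    intro xy hxy
    have h0 : hyb A xy.1 xy.2 0 = xy.1 := by
      funext k; simp [hyb]
    have hn : hyb A xy.1 xy.2 n = (fun k => if k ∈ A then xy.2 k else xy.1 k) := by
      funext k
      simp only [hyb]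
      by_cases hk : k ∈ A
      · rw [if_pos ⟨hk, k.isLt⟩, if_pos hk]
      · rw [if_neg (fun hc => hk hc.1), if_neg hk]
    obtain ⟨r, hr, hρ⟩ := chain_exists ρ hirr hsplit
      (fun r => f (hyb A xy.1 xy.2 r)) n
      (by show ρ (f (hyb A xy.1 xy.2 0)) (f (hyb A xy.1 xy.2 n))
          rw [h0, hn]; exact hxy)
    have hρ' : ρ (f (hyb A xy.1 xy.2 r)) (f (hyb A xy.1 xy.2 (r + 1))) := hρ
    refine ⟨⟨r, hr⟩, ?_, hρ'⟩
    by_contra hjA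
    have heq : hyb A xy.1 xy.2 (r + 1) = hyb A xy.1 xy.2 r := by
      funext k
      simp only [hyb]
      by_cases hk : k ∈ A ∧ (k : ℕ) < r
      · rw [if_pos ⟨hk.1, by omega⟩, if_pos hk]
      · by_cases hk2 : k ∈ A ∧ (k : ℕ) < r + 1
        · exfalso
          have hkr : (k : ℕ) = r := by
            rcases hk2 with ⟨hkA, hlt⟩
            by_contra hne2
            exact hk ⟨hkA, by omega⟩
          exact hjA (by rw [show (⟨r, hr⟩ : Fin n) = k from Fin.ext hkr.symm]; exact hk2.1)
        · rw [if_neg hk2, if_neg hk]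
    rw [heq] at hρ'
    exact absurd hρ' (hirr _)
  have hstep2 : ∀ j ∈ A, prob (fun xy : Profile n q × Profile n q =>
      ρ (f (hyb A xy.1 xy.2 (j : ℕ))) (f (hyb A xy.1 xy.2 ((j : ℕ) + 1))))
      = prob (fun wv : Profile n q × Ranking q =>
          ρ (f wv.1) (f (Function.update wv.1 j wv.2))) := by
    intro j hjA
    have e1 : prob (fun xy : Profile n q × Profile n q =>
        ρ (f (hyb A xy.1 xy.2 (j : ℕ))) (f (hyb A xy.1 xy.2 ((j : ℕ) + 1))))
        = prob (fun xy : Profile n q × Profile n q =>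
            ρ (f xy.1) (f (Function.update xy.1 j (xy.2 j)))) := by
      rw [← prob_equiv (hybEquiv A (j : ℕ)) (fun xy : Profile n q × Profile n q =>
        ρ (f (hyb A xy.1 xy.2 (j : ℕ))) (f (hyb A xy.1 xy.2 ((j : ℕ) + 1))))]
      apply prob_congr
      intro xy
      show ρ (f (hyb A (hyb A xy.1 xy.2 (j : ℕ)) (hyb A xy.2 xy.1 (j : ℕ)) (j : ℕ)))
          (f (hyb A (hyb A xy.1 xy.2 (j : ℕ)) (hyb A xy.2 xy.1 (j : ℕ)) ((j : ℕ) + 1)))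
        ↔ ρ (f xy.1) (f (Function.update xy.1 j (xy.2 j)))
      have hfst : hyb A (hyb A xy.1 xy.2 (j : ℕ)) (hyb A xy.2 xy.1 (j : ℕ)) (j : ℕ) = xy.1 := by
        funext k
        simp only [hyb]
        by_cases hk : k ∈ A ∧ (k : ℕ) < (j : ℕ)
        · rw [if_pos hk, if_pos hk]
        · rw [if_neg hk, if_neg hk]
      have hsnd : hyb A (hyb A xy.1 xy.2 (j : ℕ)) (hyb A xy.2 xy.1 (j : ℕ)) ((j : ℕ) + 1)
          = Function.update xy.1 j (xy.2 j) := by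
        funext k
        by_cases hkj : k = j
        · subst hkj
          have h1 : (k ∈ A ∧ (k : ℕ) < (k : ℕ) + 1) := ⟨hjA, by omega⟩
          have h2 : ¬ (k ∈ A ∧ (k : ℕ) < (k : ℕ)) := fun hc => by omega
          simp only [hyb]
          rw [if_pos h1, if_neg h2, Function.update_self]
        · have hvk : ¬ ((k : ℕ) = (j : ℕ)) := fun h => hkj (Fin.ext h)
          rw [Function.update_of_ne hkj]
          simp only [hyb]
          by_cases hkA : k ∈ A
          · by_cases hlt : (k : ℕ) < (j : ℕ)
            · rw [if_pos ⟨hkA, by omega⟩, if_pos ⟨hkA, hlt⟩]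
            · have hcond : ¬ (k ∈ A ∧ (k : ℕ) < (j : ℕ) + 1) := by
                rintro ⟨-, hlt2⟩; omega
              rw [if_neg hcond, if_neg (fun hc => hlt hc.2)]
          · rw [if_neg (fun hc => hkA hc.1), if_neg (fun hc => hkA hc.1)]
      rw [hfst, hsnd]
    have e2 : prob (fun xy : Profile n q × Profile n q =>
        ρ (f xy.1) (f (Function.update xy.1 j (xy.2 j))))
        = prob (fun wv : Profile n q × Ranking q =>
            ρ (f wv.1) (f (Function.update wv.1 j wv.2))) := by
      set m := (univ.filter fun y : Profile n q => y j = 1).card with hmdef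
      have hm0 : 0 < m := by
        rw [hmdef]
        apply Finset.card_pos.mpr
        exact ⟨(fun _ => 1), by simp⟩
      refine prob_push (fun xy : Profile n q × Profile n q => (xy.1, xy.2 j)) m ?_ hm0
        (fun wv => ρ (f wv.1) (f (Function.update wv.1 j wv.2)))
      intro wv
      rw [Finset.filter_congr_decidable]
      show (univ.filter fun xy : Profile n q × Profile n q => (xy.1, xy.2 j) = wv).card = m
      have h1 : (univ.filter fun xy : Profile n q × Profile n q => (xy.1, xy.2 j) = wv)
          = (univ.filter fun x : Profile n q => x = wv.1) ×ˢ
            (univ.filter fun y : Profile n q => y j = wv.2) := by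
        ext xy
        simp only [Finset.mem_filter, Finset.mem_univ, true_and, Finset.mem_product,
          Prod.ext_iff]
      rw [h1, Finset.card_product]
      have h3 : (univ.filter fun x : Profile n q => x = wv.1).card = 1 := by
        rw [Finset.filter_eq']
        simp
      rw [h3, one_mul, hmdef]
      refine Finset.card_bij' (fun y _ => Function.update y j 1)
        (fun y _ => Function.update y j wv.2) ?_ ?_ ?_ ?_
      · intro y hy
        simp [Function.update_self]
      · intro y hy
        simp [Function.update_self]
      · intro y hy
        simp only [Finset.mem_filter, Finset.mem_univ, true_and] at hy
        show Function.update (Function.update y j 1) j wv.2 = y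
        rw [Function.update_idem, ← hy, Function.update_eq_self]
      · intro y hy
        simp only [Finset.mem_filter, Finset.mem_univ, true_and] at hy
        show Function.update (Function.update y j wv.2) j 1 = y
        rw [Function.update_idem, ← hy, Function.update_eq_self]
    rw [e1, e2]
  calc prob (fun xy : Profile n q × Profile n q =>
        ρ (f xy.1) (f (fun k => if k ∈ A then xy.2 k else xy.1 k)))
      ≤ ∑ j ∈ A, prob (fun xy : Profile n q × Profile n q =>
          ρ (f (hyb A xy.1 xy.2 (j : ℕ))) (f (hyb A xy.1 xy.2 ((j : ℕ) + 1)))) := hstep1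
    _ = ∑ j ∈ A, prob (fun wv : Profile n q × Ranking q =>
          ρ (f wv.1) (f (Function.update wv.1 j wv.2))) := Finset.sum_congr rfl hstep2
    _ ≤ ∑ j ∈ A, ((q : ℝ) * (q : ℝ) * ∑ p ∈ Finset.range (q - 1), edgeP f ρ j p) :=
        Finset.sum_le_sum (fun j _ => per_coord f ρ hirr hsplit j)
    _ = (q : ℝ) * (q : ℝ) * ∑ j ∈ A, ∑ p ∈ Finset.range (q - 1), edgeP f ρ j p := by
        rw [Finset.mul_sum]

end Master

end AuxProofs

set_option maxHeartbeats 2000000 in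
/-- if `q ≥ 3` and `Dist(f, NONMANIP) ≥ ε`, then either a random profile is a
`2`-manipulation point with probability at least `4ε/(nq⁷)`, or there are `i ≠ j` and pairs
`{a,b}`, `{c,d}` with `c ∉ {a,b}` such that
`Inf_i^{a,b;[a:b]}(f), Inf_j^{c,d;[c:d]}(f) ≥ 2ε/(nq⁷)`. -/
theorem large_refined_boundaries (n q : ℕ) (hq : 3 ≤ q) (f : Profile n q → Fin q) (ε : ℝ)
    (hdist : ∀ g : Profile n q → Fin q,
      IsDictator g ∨ TakesAtMostTwoValues g → distF f g ≥ ε) :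
    prob (fun x : Profile n q => IsRManip f 2 x) ≥ 4 * ε / ((n : ℝ) * (q : ℝ) ^ 7) ∨
    ∃ (i j : Fin n) (a b c d : Fin q), i ≠ j ∧ a ≠ b ∧ c ≠ d ∧ c ≠ a ∧ c ≠ b ∧
      infABadj f i a b ≥ 2 * ε / ((n : ℝ) * (q : ℝ) ^ 7) ∧
      infABadj f j c d ≥ 2 * ε / ((n : ℝ) * (q : ℝ) ^ 7) := by
  by_contra hcon
  push_neg at hcon
  obtain ⟨h1, h2⟩ := hcon
  set N : ℝ := (n : ℝ) with hNdef
  set Q : ℝ := (q : ℝ) with hQdef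
  set M : ℝ := prob (fun x : Profile n q => IsRManip f 2 x) with hMdef
  set t : ℝ := 2 * ε / (N * Q ^ 7) with htdef
  have hM0 : 0 ≤ M := prob_nonneg _
  have hQ3 : (3 : ℝ) ≤ Q := by rw [hQdef]; exact_mod_cast hq
  have hQ0 : (0 : ℝ) < Q := by linarith
  -- ε > 0
  have hε : 0 < ε := by
    by_contra hc
    push_neg at hc
    have hd : 4 * ε / (N * Q ^ 7) ≤ 0 := by
      rw [div_eq_mul_inv]
      apply mul_nonpos_of_nonpos_of_nonneg (by linarith)
      positivity
    linarith [h1, hM0]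
  -- n ≥ 1
  rcases Nat.eq_zero_or_pos n with hn0 | hn
  · have hN0 : N = 0 := by rw [hNdef, hn0]; norm_num
    rw [hN0, zero_mul, div_zero] at h1
    linarith [h1, hM0]
  have hN1 : (1 : ℝ) ≤ N := by rw [hNdef]; exact_mod_cast hn
  have hN0' : (0 : ℝ) < N := by linarith
  have hMle : M ≤ 4 * ε / (N * Q ^ 7) := le_of_lt h1
  have h27 : (27 : ℝ) ≤ Q ^ 3 := by
    have := pow_le_pow_left₀ (by norm_num : (0:ℝ) ≤ 3) hQ3 3
    norm_num at this
    linarith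
  have h81 : (81 : ℝ) ≤ Q ^ 4 := by
    have := pow_le_pow_left₀ (by norm_num : (0:ℝ) ≤ 3) hQ3 4
    norm_num at this
    linarith
  have ht0 : 0 < t := by rw [htdef]; positivity
  -- ============ Step A : three alternatives with large mu ============
  obtain ⟨a0, -, ha0max⟩ := Finset.exists_max_image (univ : Finset (Fin q)) (mu f)
    ⟨⟨0, by omega⟩, Finset.mem_univ _⟩
  have herasene : ((univ : Finset (Fin q)).erase a0).Nonempty := by
    by_cases hA : a0 = ⟨0, by omega⟩
    · refine ⟨⟨1, by omega⟩, Finset.mem_erase.mpr ⟨?_, Finset.mem_univ _⟩⟩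
      rw [hA]
      intro h
      have := congrArg Fin.val h
      simp at this
    · exact ⟨⟨0, by omega⟩, Finset.mem_erase.mpr ⟨fun hh => hA hh.symm, Finset.mem_univ _⟩⟩
  obtain ⟨b0, hb0mem, hb0max⟩ := Finset.exists_max_image ((univ : Finset (Fin q)).erase a0)
    (mu f) herasene
  have hb0a0 : b0 ≠ a0 := (Finset.mem_erase.mp hb0mem).1
  -- distance to the two-valued function keeping a0, b0
  have hg2 : ε ≤ prob (fun x : Profile n q => ¬ (f x = a0 ∨ f x = b0)) := by
    set g : Profile n q → Fin q := fun x => if f x = a0 ∨ f x = b0 then f x else a0 with hgdef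
    have htv : TakesAtMostTwoValues g := by
      refine ⟨a0, b0, fun x => ?_⟩
      show (if f x = a0 ∨ f x = b0 then f x else a0) = a0
        ∨ (if f x = a0 ∨ f x = b0 then f x else a0) = b0
      by_cases h : f x = a0 ∨ f x = b0
      · rw [if_pos h]; exact h
      · rw [if_neg h]; exact Or.inl rfl
    have hdg := hdist g (Or.inr htv)
    have heq : distF f g = prob (fun x : Profile n q => ¬ (f x = a0 ∨ f x = b0)) := by
      unfold distF
      apply prob_congr
      intro x
      show f x ≠ (if f x = a0 ∨ f x = b0 then f x else a0) ↔ ¬ (f x = a0 ∨ f x = b0)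
      by_cases h : f x = a0 ∨ f x = b0
      · rw [if_pos h]; simp [h]
      · rw [if_neg h]
        constructor
        · intro _; exact h
        · intro _ heq2
          exact h (Or.inl heq2)
    rw [heq] at hdg
    exact hdg
  -- some c0 outside {a0,b0} with mu ≥ ε/q
  have hsum : ε ≤ ∑ c ∈ ((univ : Finset (Fin q)).erase a0).erase b0, mu f c := by
    refine le_trans hg2 ?_
    apply prob_le_sum
    intro x hx
    push_neg at hx
    exact ⟨f x, Finset.mem_erase.mpr ⟨hx.2, Finset.mem_erase.mpr ⟨hx.1, Finset.mem_univ _⟩⟩, rfl⟩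
  obtain ⟨c0, hc0mem, hc0⟩ := exists_ge_of_sum_ge hQ0
    (by calc ((((univ : Finset (Fin q)).erase a0).erase b0).card : ℝ)
          ≤ (Fintype.card (Fin q) : ℝ) := by exact_mod_cast Finset.card_le_univ _
        _ = Q := by rw [hQdef]; simp) hε hsum
  have hc0b0 : c0 ≠ b0 := (Finset.mem_erase.mp hc0mem).1
  have hc0a0 : c0 ≠ a0 := (Finset.mem_erase.mp (Finset.mem_erase.mp hc0mem).2).1
  have hμc : ε / Q ≤ mu f c0 := hc0
  have hμa : ε / Q ≤ mu f a0 := le_trans hμc (ha0max c0 (Finset.mem_univ _))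
  have hμb : ε / Q ≤ mu f b0 :=
    le_trans hμc (hb0max c0 (Finset.mem_erase.mp hc0mem).2)
  -- ============ per-alternative key bound  ============
  have hkey : ∀ e : Fin q, ε / Q ≤ mu f e → ε / (2 * Q) ≤ mu f e * (1 - mu f e) := by
    intro e hμe
    have hconst : ε ≤ 1 - mu f e := by
      have hdg := hdist (fun _ => e) (Or.inr ⟨e, e, fun _ => Or.inl rfl⟩)
      have heq : distF f (fun _ => e) = 1 - mu f e := by
        unfold distF
        rw [show (fun x : Profile n q => f x ≠ (fun _ => e) x)
          = (fun x : Profile n q => ¬ (f x = e)) from rfl]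
        rw [prob_not]
        rfl
      rw [heq] at hdg
      exact hdg
    have hμ0 : 0 ≤ mu f e := prob_nonneg _
    by_cases hhalf : mu f e ≤ 1 / 2
    · have hh : (1:ℝ)/2 ≤ 1 - mu f e := by linarith
      calc ε / (2 * Q) = (ε / Q) * (1/2) := by ring
        _ ≤ mu f e * (1 - mu f e) :=
          mul_le_mul hμe hh (by norm_num) hμ0
    · push_neg at hhalf
      calc ε / (2 * Q) ≤ (1/2) * ε := by
            rw [div_le_iff₀ (by positivity)]
            nlinarith
        _ ≤ mu f e * (1 - mu f e) :=
          mul_le_mul (by linarith) hconst (by linarith) (by linarith)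
  -- ============ get a large boundary triple for each big alternative ============
  have gt : ∀ e : Fin q, ε / Q ≤ mu f e → ∃ (j : Fin n) (β : Fin q), β ≠ e ∧
      t ≤ infABadj f j e β := by
    intro e hμe
    set ρ : Fin q → Fin q → Prop := fun u v => u = e ∧ ¬ (v = e) with hρdef
    have hirr : ∀ a, ¬ ρ a a := fun a h => h.2 h.1
    have hsplit : ∀ a c, ρ a c → ∀ b, ρ a b ∨ ρ b c := by
      intro a c hac b
      by_cases hb : b = e
      · exact Or.inr ⟨hb, hac.2⟩
      · exact Or.inl ⟨hac.1, hb⟩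
    have hmas := master f univ ρ hirr hsplit
    have hLHS : prob (fun xy : Profile n q × Profile n q =>
        ρ (f xy.1) (f (fun k => if k ∈ (univ : Finset (Fin n)) then xy.2 k else xy.1 k)))
        = mu f e * (1 - mu f e) := by
      have hcg : ∀ xy : Profile n q × Profile n q,
          ρ (f xy.1) (f (fun k => if k ∈ (univ : Finset (Fin n)) then xy.2 k else xy.1 k))
          ↔ ((fun x : Profile n q => f x = e) xy.1 ∧ (fun y : Profile n q => ¬ (f y = e)) xy.2) := by
        intro xy
        have heq2 : (fun k => if k ∈ (univ : Finset (Fin n)) then xy.2 k else xy.1 k) = xy.2 := by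
          funext k; simp
        rw [heq2]
      rw [prob_congr hcg, prob_fst_and_snd (fun x : Profile n q => f x = e)
        (fun y : Profile n q => ¬ (f y = e)), prob_not]
      rfl
    -- edge decomposition per coordinate
    have hedge : ∀ j : Fin n, ∑ p ∈ Finset.range (q - 1), edgeP f ρ j p
        ≤ ((q - 1 : ℕ) : ℝ) * (2 * M) + ∑ ab ∈ pairsOf ρ, 2 * infABadj f j ab.1 ab.2 := by
      intro j
      have hne : ∀ a b : Fin q, ρ a b → a ≠ b := by
        rintro a b ⟨hae, hbe⟩ rfl
        exact hbe hae
      calc ∑ p ∈ Finset.range (q - 1), edgeP f ρ j p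
          ≤ ∑ p ∈ Finset.range (q - 1),
              (2 * M + ∑ ab ∈ pairsOf ρ, prob (CEv f j p ab.1 ab.2)) :=
            Finset.sum_le_sum fun p _ => edge_decomp f ρ hne j p
        _ = ((q - 1 : ℕ) : ℝ) * (2 * M)
            + ∑ p ∈ Finset.range (q - 1), ∑ ab ∈ pairsOf ρ, prob (CEv f j p ab.1 ab.2) := by
            rw [Finset.sum_add_distrib, Finset.sum_const, Finset.card_range, nsmul_eq_mul]
        _ = ((q - 1 : ℕ) : ℝ) * (2 * M)
            + ∑ ab ∈ pairsOf ρ, ∑ p ∈ Finset.range (q - 1), prob (CEv f j p ab.1 ab.2) := by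
            rw [Finset.sum_comm]
        _ ≤ ((q - 1 : ℕ) : ℝ) * (2 * M) + ∑ ab ∈ pairsOf ρ, 2 * infABadj f j ab.1 ab.2 := by
            refine add_le_add le_rfl (Finset.sum_le_sum fun ab _ => ?_)
            exact conf_sum f j ab.1 ab.2
    set Sg : ℝ := ∑ jab ∈ (univ : Finset (Fin n)) ×ˢ pairsOf ρ,
        infABadj f jab.1 jab.2.1 jab.2.2 with hSgdef
    have hSgsum : Sg = ∑ j : Fin n, ∑ ab ∈ pairsOf ρ, infABadj f j ab.1 ab.2 := by
      rw [hSgdef, Finset.sum_product]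
    have htot : mu f e * (1 - mu f e)
        ≤ Q * Q * (N * (((q - 1 : ℕ) : ℝ) * (2 * M)) + 2 * Sg) := by
      rw [← hLHS]
      refine le_trans hmas ?_
      refine mul_le_mul_of_nonneg_left ?_ (by positivity)
      calc ∑ j : Fin n, ∑ p ∈ Finset.range (q - 1), edgeP f ρ j p
          ≤ ∑ j : Fin n, (((q - 1 : ℕ) : ℝ) * (2 * M)
              + ∑ ab ∈ pairsOf ρ, 2 * infABadj f j ab.1 ab.2) :=
            Finset.sum_le_sum fun j _ => hedge j
        _ = N * (((q - 1 : ℕ) : ℝ) * (2 * M)) + 2 * Sg := by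
            rw [Finset.sum_add_distrib, Finset.sum_const, Finset.card_univ, nsmul_eq_mul,
              hSgsum, Finset.mul_sum]
            congr 1
            · rw [hNdef]; simp
            · refine Finset.sum_congr rfl fun j _ => ?_
              rw [Finset.mul_sum]
    -- numeric: Sg ≥ ε / (10 Q³)
    have hq1cast : ((q - 1 : ℕ) : ℝ) ≤ Q := by
      rw [hQdef]; exact_mod_cast Nat.sub_le q 1
    have hSglb : ε / (10 * Q ^ 3) ≤ Sg := by
      by_contra hc
      push_neg at hc
      have hb1 : N * (((q - 1 : ℕ) : ℝ) * (2 * M)) ≤ 8 * ε / Q ^ 6 := by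
        have hq1c0 : (0:ℝ) ≤ ((q - 1 : ℕ) : ℝ) := by positivity
        calc N * (((q - 1 : ℕ) : ℝ) * (2 * M)) ≤ N * (Q * (2 * (4 * ε / (N * Q ^ 7)))) := by
              refine mul_le_mul_of_nonneg_left ?_ (by positivity)
              exact mul_le_mul hq1cast (by linarith) (by linarith) (by linarith)
          _ = 8 * ε / Q ^ 6 := by
              field_simp
              ring
      have hcomb : mu f e * (1 - mu f e)
          < Q * Q * (8 * ε / Q ^ 6 + 2 * (ε / (10 * Q ^ 3))) := by
        refine lt_of_le_of_lt htot ?_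
        have : N * (((q - 1 : ℕ) : ℝ) * (2 * M)) + 2 * Sg
            < 8 * ε / Q ^ 6 + 2 * (ε / (10 * Q ^ 3)) := by
          have h2' : 2 * Sg < 2 * (ε / (10 * Q ^ 3)) := by linarith
          linarith
        exact mul_lt_mul_of_pos_left this (by positivity)
      have hval : Q * Q * (8 * ε / Q ^ 6 + 2 * (ε / (10 * Q ^ 3))) = 8 * ε / Q ^ 4 + ε / (5 * Q) := by
        field_simp
        ring
      rw [hval] at hcomb
      have hkk := hkey e hμe
      have hmain : ε / (2 * Q) < 8 * ε / Q ^ 4 + ε / (5 * Q) := lt_of_le_of_lt hkk hcomb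
      have hQne : Q ≠ 0 := ne_of_gt hQ0
      have hv0 : (0:ℝ) < ε / Q ^ 4 := by positivity
      have hEq1 : ε / (2 * Q) = ε / Q / 2 := by
        rw [div_div]; ring_nf
      have hEq2 : ε / (5 * Q) = ε / Q / 5 := by
        rw [div_div]; ring_nf
      have huv : ε / Q = Q ^ 3 * (ε / Q ^ 4) := by
        field_simp
      have h27v : 27 * (ε / Q ^ 4) ≤ Q ^ 3 * (ε / Q ^ 4) :=
        mul_le_mul_of_nonneg_right h27 (le_of_lt hv0)
      rw [hEq1, hEq2, huv] at hmain
      have h8 : 8 * ε / Q ^ 4 = 8 * (ε / Q ^ 4) := by ring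
      rw [h8] at hmain
      linarith [hmain, h27v, hv0]
    -- extraction
    have hcardp : ((pairsOf ρ).card : ℝ) ≤ Q := by
      rw [hQdef]
      have hcard : (pairsOf ρ).card ≤ q := by
        calc (pairsOf ρ).card ≤ (univ : Finset (Fin q)).card := by
              refine Finset.card_le_card_of_injOn (fun ab => ab.2)
                (fun ab _ => Finset.mem_univ _) ?_
              intro ab hab ab' hab' hsnd
              simp only [Finset.coe_filter, Set.mem_setOf_eq, pairsOf, Finset.mem_coe,
                Finset.mem_filter, Finset.mem_univ, true_and] at hab hab'
              exact Prod.ext (hab.1.trans hab'.1.symm) hsnd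
          _ = q := by simp
      exact_mod_cast hcard
    have hcardT : (((univ : Finset (Fin n)) ×ˢ pairsOf ρ).card : ℝ) ≤ N * Q := by
      rw [Finset.card_product]
      push_cast
      have h1' : ((univ : Finset (Fin n)).card : ℝ) = N := by rw [hNdef]; simp
      rw [h1']
      exact mul_le_mul_of_nonneg_left hcardp (by linarith)
    obtain ⟨jab, hjabmem, hjab⟩ := exists_ge_of_sum_ge (by positivity : (0:ℝ) < N * Q)
      hcardT (by positivity : (0:ℝ) < ε / (10 * Q ^ 3)) hSglb
    have hjabp : jab.2 ∈ pairsOf ρ := (Finset.mem_product.mp hjabmem).2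
    have hjabρ : ρ jab.2.1 jab.2.2 := by
      simpa [pairsOf] using hjabp
    have hfinal : t ≤ ε / (10 * Q ^ 3) / (N * Q) := by
      have hd1 : (0:ℝ) < N * Q ^ 7 := by positivity
      have hd2 : (0:ℝ) < 10 * Q ^ 3 * (N * Q) := by positivity
      rw [htdef, div_div, div_le_div_iff₀ hd1 hd2]
      have hQ40 : (0:ℝ) ≤ Q ^ 4 := by positivity
      have hmm : 27 * Q ^ 4 ≤ Q ^ 3 * Q ^ 4 := mul_le_mul_of_nonneg_right h27 hQ40
      have hpow : Q ^ 3 * Q ^ 4 = Q ^ 7 := by ring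
      have h20 : (20:ℝ) * Q ^ 4 ≤ Q ^ 7 := by linarith
      have hεN : (0:ℝ) ≤ ε * N := le_of_lt (mul_pos hε hN0')
      have hkey2 : (ε * N) * (20 * Q ^ 4) ≤ (ε * N) * Q ^ 7 :=
        mul_le_mul_of_nonneg_left h20 hεN
      have heq1 : 2 * ε * (10 * Q ^ 3 * (N * Q)) = (ε * N) * (20 * Q ^ 4) := by ring
      have heq2 : ε * (N * Q ^ 7) = (ε * N) * Q ^ 7 := by ring
      rw [heq1, heq2]
      exact hkey2
    refine ⟨jab.1, jab.2.2, hjabρ.2, ?_⟩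
    have := le_trans hfinal hjab
    rwa [hjabρ.1] at this
  -- ============ the three triples ============
  obtain ⟨ja, βa, hβa, hia⟩ := gt a0 hμa
  obtain ⟨jb, βb, hβb, hib⟩ := gt b0 hμb
  obtain ⟨jc, βc, hβc, hic⟩ := gt c0 hμc
  -- killer: no two large triples across coordinates with fresh first alternative
  have kill : ∀ (i j : Fin n) (a b c d : Fin q), i ≠ j → a ≠ b → c ≠ d → c ≠ a → c ≠ b →
      t ≤ infABadj f i a b → t ≤ infABadj f j c d → False := by
    intro i j a b c d hij hab hcd hca hcb hge1 hge2
    exact absurd hge2 (not_le.mpr (h2 i j a b c d hij hab hcd hca hcb hge1))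
  -- case: the triples are not all on the same coordinate → contradiction
  by_cases hiac : ja = jc
  case neg =>
    -- jc ≠ ja : use (ja, a0, βa) and (jc, c0, βc) etc.
    by_cases hc0βa : c0 = βa
    · -- c0 = βa; then use b-triple against one of a/c triples
      by_cases hicb : jc = jb
      · -- jc = jb ≠ ja? we have ja ≠ jc = jb: pair (ja,a0,βa) with (jb,b0,βb): b0 ≠ a0 ✓, b0 = βa = c0? no b0 ≠ c0 = βa ✓
        exact kill ja jb a0 βa b0 βb (fun h => hiac (h.trans hicb.symm))
          (Ne.symm hβa) (Ne.symm hβb) hb0a0 (by rw [← hc0βa]; exact Ne.symm hc0b0) hia hib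
      · -- jc ≠ jb : pair (jb, b0, βb) with (jc, c0, βc): c0 ≠ b0 ✓ c0 ≠ βb? unknown!
        by_cases hc0βb : c0 = βb
        · -- c0 = βa and c0 = βb: pair (ja,a0,βa=c0) with (jc, c0, βc)? c0 = βa ∈ pair! fails.
          -- use (jc,c0,βc) as first, (ja,a0,βa) as second: need a0 ∉ {c0, βc}: a0 ≠ c0 ✓, a0 ≠ βc?
          by_cases ha0βc : a0 = βc
          · -- a0 = βc: pair (jc,c0,βc=a0) with (jb,b0,βb=c0): b0 ∉ {c0,βc}: b0≠c0 ✓ b0≠βc=a0 ✓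
            exact kill jc jb c0 βc b0 βb (fun h => hicb h) (Ne.symm hβc) (Ne.symm hβb)
              hc0b0.symm (by rw [← ha0βc]; exact hb0a0) hic hib
          · exact kill jc ja c0 βc a0 βa (fun h => hiac h.symm) (Ne.symm hβc) (Ne.symm hβa)
              hc0a0.symm (fun h => ha0βc h) hic hia
        · exact kill jb jc b0 βb c0 βc (fun h => hicb h.symm) (Ne.symm hβb) (Ne.symm hβc)
            hc0b0 (fun h => hc0βb h) hib hic
    · exact kill ja jc a0 βa c0 βc hiac (Ne.symm hβa) (Ne.symm hβc) hc0a0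
        (fun h => hc0βa h) hia hic
  case pos =>
  by_cases hiab : ja = jb
  case neg =>
    -- jb ≠ ja = jc : pair (jb, b0, βb) with (jc, c0, βc): c0 ≠ b0 ✓ need c0 ≠ βb
    by_cases hc0βb : c0 = βb
    · -- c0 = βb: pair (jb,b0,βb=c0) with (ja,a0,βa): a0 ∉ {b0, c0} ✓? a0≠b0 ✓ a0≠βb=c0 ✓
      exact kill jb ja b0 βb a0 βa (fun h => hiab h.symm) (Ne.symm hβb) (Ne.symm hβa)
        hb0a0.symm (by rw [← hc0βb]; exact Ne.symm hc0a0) hib hia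
    · exact kill jb jc b0 βb c0 βc (fun h => hiab (hiac.trans h.symm))
        (Ne.symm hβb) (Ne.symm hβc) hc0b0 (fun h => hc0βb h) hib hic
  case pos =>
  -- all triples on i₀ := ja
  set i₀ : Fin n := ja with hi₀
  -- every other coordinate has only small boundaries
  have hsmall : ∀ j : Fin n, j ≠ i₀ → ∀ α β : Fin q, α ≠ β → infABadj f j α β < t := by
    intro j hji α β hαβ
    by_contra hge
    push_neg at hge
    by_cases hAa : a0 ≠ α ∧ a0 ≠ β
    · exact kill j i₀ α β a0 βa hji hαβ (Ne.symm hβa) hAa.1 hAa.2 hge hia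
    by_cases hAb : b0 ≠ α ∧ b0 ≠ β
    · exact kill j i₀ α β b0 βb hji hαβ (Ne.symm hβb) hAb.1 hAb.2 hge
        (by rw [← hiab] at hib; exact hib)
    by_cases hAc : c0 ≠ α ∧ c0 ≠ β
    · exact kill j i₀ α β c0 βc hji hαβ (Ne.symm hβc) hAc.1 hAc.2 hge
        (by rw [← hiac] at hic; exact hic)
    -- all of a0,b0,c0 in {α,β}: contradiction with distinctness
    rw [not_and_or, not_ne_iff, not_ne_iff] at hAa hAb hAc
    rcases hAa with ha1 | ha1 <;> rcases hAb with hb1 | hb1 <;> rcases hAc with hc1 | hc1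
    · exact hb0a0 (hb1.trans ha1.symm)
    · exact hb0a0 (hb1.trans ha1.symm)
    · exact hc0a0 (hc1.trans ha1.symm)
    · exact hc0b0 (hc1.trans hb1.symm)
    · exact hc0b0 (hc1.trans hb1.symm)
    · exact hc0a0 (hc1.trans ha1.symm)
    · exact hb0a0 (hb1.trans ha1.symm)
    · exact hb0a0 (hb1.trans ha1.symm)
  -- ============ Case 1 : f is close to a function of coordinate i₀ ============
  set A : Finset (Fin n) := (univ : Finset (Fin n)).erase i₀ with hAdef
  set ρ' : Fin q → Fin q → Prop := fun u v => u ≠ v with hρ'def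
  have hirr' : ∀ a, ¬ ρ' a a := fun a h => h rfl
  have hsplit' : ∀ a c, ρ' a c → ∀ b, ρ' a b ∨ ρ' b c := by
    intro a c hac b
    by_cases hab : a = b
    · exact Or.inr (hab ▸ hac)
    · exact Or.inl hab
  have hmas' := master f A ρ' hirr' hsplit'
  have hcardpairs : ((pairsOf ρ').card : ℝ) ≤ Q * Q := by
    have h1' : (pairsOf ρ').card ≤ q * q := by
      calc (pairsOf ρ').card ≤ Fintype.card (Fin q × Fin q) := Finset.card_le_univ _
        _ = q * q := by simp
    calc ((pairsOf ρ').card : ℝ) ≤ ((q * q : ℕ) : ℝ) := by exact_mod_cast h1'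
      _ = Q * Q := by rw [hQdef]; push_cast; ring
  have hq1cast : ((q - 1 : ℕ) : ℝ) ≤ Q := by
    rw [hQdef]; exact_mod_cast Nat.sub_le q 1
  have hedge' : ∀ j ∈ A, ∑ p ∈ Finset.range (q - 1), edgeP f ρ' j p
      ≤ ((q - 1 : ℕ) : ℝ) * (2 * M) + 2 * (Q * Q * t) := by
    intro j hjA
    have hjne : j ≠ i₀ := Finset.ne_of_mem_erase hjA
    have hne' : ∀ a b : Fin q, ρ' a b → a ≠ b := fun a b h => h
    calc ∑ p ∈ Finset.range (q - 1), edgeP f ρ' j p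
        ≤ ∑ p ∈ Finset.range (q - 1),
            (2 * M + ∑ ab ∈ pairsOf ρ', prob (CEv f j p ab.1 ab.2)) :=
          Finset.sum_le_sum fun p _ => edge_decomp f ρ' hne' j p
      _ = ((q - 1 : ℕ) : ℝ) * (2 * M)
          + ∑ p ∈ Finset.range (q - 1), ∑ ab ∈ pairsOf ρ', prob (CEv f j p ab.1 ab.2) := by
          rw [Finset.sum_add_distrib, Finset.sum_const, Finset.card_range, nsmul_eq_mul]
      _ = ((q - 1 : ℕ) : ℝ) * (2 * M)
          + ∑ ab ∈ pairsOf ρ', ∑ p ∈ Finset.range (q - 1), prob (CEv f j p ab.1 ab.2) := by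
          rw [Finset.sum_comm]
      _ ≤ ((q - 1 : ℕ) : ℝ) * (2 * M) + ∑ ab ∈ pairsOf ρ', 2 * infABadj f j ab.1 ab.2 :=
          add_le_add le_rfl (Finset.sum_le_sum fun ab _ => conf_sum f j ab.1 ab.2)
      _ ≤ ((q - 1 : ℕ) : ℝ) * (2 * M) + 2 * (Q * Q * t) := by
          refine add_le_add le_rfl ?_
          have hsum2 : ∑ ab ∈ pairsOf ρ', 2 * infABadj f j ab.1 ab.2
              ≤ ∑ _ab ∈ pairsOf ρ', 2 * t := by
            refine Finset.sum_le_sum fun ab hab => ?_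
            have habne : ab.1 ≠ ab.2 := by
              simpa [pairsOf, hρ'def] using hab
            have := hsmall j hjne ab.1 ab.2 habne
            linarith
          refine le_trans hsum2 ?_
          rw [Finset.sum_const, nsmul_eq_mul]
          calc ((pairsOf ρ').card : ℝ) * (2 * t) ≤ (Q * Q) * (2 * t) :=
                mul_le_mul_of_nonneg_right hcardpairs (by linarith [ht0])
            _ = 2 * (Q * Q * t) := by ring
  have hR : prob (fun xy : Profile n q × Profile n q =>
      ρ' (f xy.1) (f (fun k => if k ∈ A then xy.2 k else xy.1 k)))
      ≤ Q * Q * (N * (((q - 1 : ℕ) : ℝ) * (2 * M) + 2 * (Q * Q * t))) := by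
    refine le_trans hmas' ?_
    refine mul_le_mul_of_nonneg_left ?_ (by positivity)
    calc ∑ j ∈ A, ∑ p ∈ Finset.range (q - 1), edgeP f ρ' j p
        ≤ ∑ _j ∈ A, (((q - 1 : ℕ) : ℝ) * (2 * M) + 2 * (Q * Q * t)) :=
          Finset.sum_le_sum hedge'
      _ = (A.card : ℝ) * (((q - 1 : ℕ) : ℝ) * (2 * M) + 2 * (Q * Q * t)) := by
          rw [Finset.sum_const, nsmul_eq_mul]
      _ ≤ N * (((q - 1 : ℕ) : ℝ) * (2 * M) + 2 * (Q * Q * t)) := by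
          have hbnd0 : (0:ℝ) ≤ ((q - 1 : ℕ) : ℝ) * (2 * M) + 2 * (Q * Q * t) := by
            have hq10 : (0:ℝ) ≤ ((q - 1 : ℕ) : ℝ) := by positivity
            have h2M : (0:ℝ) ≤ 2 * M := by linarith [hM0]
            have hQQt : (0:ℝ) ≤ 2 * (Q * Q * t) := by
              have : (0:ℝ) ≤ Q * Q * t := mul_nonneg (mul_nonneg hQ0.le hQ0.le) ht0.le
              linarith
            have := mul_nonneg hq10 h2M
            linarith
          refine mul_le_mul_of_nonneg_right ?_ hbnd0
          have hcu := Finset.card_le_univ A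
          rw [Fintype.card_fin] at hcu
          rw [hNdef]
          exact_mod_cast hcu
  have hRlt : Q * Q * (N * (((q - 1 : ℕ) : ℝ) * (2 * M) + 2 * (Q * Q * t))) < ε := by
    have hb1 : ((q - 1 : ℕ) : ℝ) * (2 * M) ≤ Q * (2 * (4 * ε / (N * Q ^ 7))) :=
      mul_le_mul hq1cast (by linarith) (by linarith) (by linarith)
    have hb2 : Q * Q * (N * (((q - 1 : ℕ) : ℝ) * (2 * M) + 2 * (Q * Q * t)))
        ≤ Q * Q * (N * (Q * (2 * (4 * ε / (N * Q ^ 7))) + 2 * (Q * Q * (2 * ε / (N * Q ^ 7))))) := by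
      refine mul_le_mul_of_nonneg_left ?_ (by positivity)
      refine mul_le_mul_of_nonneg_left ?_ (by positivity)
      exact add_le_add hb1 (le_of_eq (by rw [htdef]))
    have hb3 : Q * Q * (N * (Q * (2 * (4 * ε / (N * Q ^ 7))) + 2 * (Q * Q * (2 * ε / (N * Q ^ 7)))))
        = 8 * ε / Q ^ 4 + 4 * ε / Q ^ 3 := by
      field_simp
      ring
    have hb4 : 8 * ε / Q ^ 4 + 4 * ε / Q ^ 3 < ε := by
      have hf1 : 8 * ε / Q ^ 4 ≤ 8 * ε / 81 :=
        div_le_div_of_nonneg_left (by linarith) (by norm_num) h81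
      have hf2 : 4 * ε / Q ^ 3 ≤ 4 * ε / 27 :=
        div_le_div_of_nonneg_left (by linarith) (by norm_num) h27
      linarith
    linarith [hb2, hb3 ▸ hb2]
  -- averaging: choose a good y₀
  have havg := prob_prod_avg (fun xy : Profile n q × Profile n q =>
    ρ' (f xy.1) (f (fun k => if k ∈ A then xy.2 k else xy.1 k)))
  obtain ⟨y₀, -, hy₀⟩ := exists_le_avg (Finset.univ_nonempty (α := Profile n q))
    (fun y : Profile n q => prob (fun x : Profile n q =>
      ρ' (f x) (f (fun k => if k ∈ A then y k else x k))))
  have hy₀2 : prob (fun x : Profile n q =>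
      ρ' (f x) (f (fun k => if k ∈ A then y₀ k else x k))) < ε := by
    refine lt_of_le_of_lt (le_trans hy₀ ?_) (lt_of_le_of_lt hR hRlt)
    rw [Finset.card_univ]
    exact le_of_eq havg.symm
  -- the dictator function
  set g : Profile n q → Fin q := fun x => f (fun k => if k ∈ A then y₀ k else x k) with hgdef
  have hdict : IsDictator g := by
    refine ⟨i₀, fun x x' hxx' => ?_⟩
    show f (fun k => if k ∈ A then y₀ k else x k) = f (fun k => if k ∈ A then y₀ k else x' k)
    congr 1
    funext k
    by_cases hk : k ∈ A
    · rw [if_pos hk, if_pos hk]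
    · rw [if_neg hk, if_neg hk]
      have hki : k = i₀ := by
        by_contra hkne
        exact hk (Finset.mem_erase.mpr ⟨hkne, Finset.mem_univ _⟩)
      rw [hki]
      exact hxx'
  have hdg := hdist g (Or.inl hdict)
  have hdfg : distF f g = prob (fun x : Profile n q =>
      ρ' (f x) (f (fun k => if k ∈ A then y₀ k else x k))) := by
    unfold distF
    apply prob_congr
    intro x
    exact Iff.rfl
  linarith [hdg, hy₀2, hdfg ▸ hdg]
end
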